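/- arXiv:2407.03083 — 5 statements merged into one kernel-verified Lean document; each statement's English description precedes it below -/
import Mathlib

section
/- For every dimension d ≥ 1 there exists a constant c_d > 0, depending only on d, with the following property. Let α ∈ (0,1), r > 0, and let B be a closed ball of radius r in ℝ^d. Let u : ℝ^d → ℝ be twice differentiable on B with |u(x)| ≤ M for all x ∈ B, and suppose the second derivative D²u is α-Hölder with constant H on B. Then for every ε ∈ (0, r]: (i) ‖Du(x)‖ ≤ ε^{1+α}·H + (c_d/ε)·M for every x ∈ B; and (ii) ‖D²u(x)‖ ≤ ε^α·H + (c_d/ε²)·M for every x ∈ B. -/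
set_option maxHeartbeats 1000000

open Metric Set

section Helpers

variable {E : Type*} [NormedAddCommGroup E] [NormedSpace ℝ E]

/-- Comparison mean value inequality for the gradient. -/
lemma mvt_cmp (u : E → ℝ) {s : Set E} (hs : Convex ℝ s)
    (A : E →L[ℝ] E →L[ℝ] ℝ) {κ : ℝ}
    (hu2 : ∀ z ∈ s, DifferentiableAt ℝ (fderiv ℝ u) z)
    (hA : ∀ z ∈ s, ‖fderiv ℝ (fderiv ℝ u) z - A‖ ≤ κ)
    {p q : E} (hp : p ∈ s) (hq : q ∈ s) :
    ‖fderiv ℝ u q - fderiv ℝ u p - A (q - p)‖ ≤ κ * ‖q - p‖ := by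
  have h := hs.norm_image_sub_le_of_norm_hasFDerivWithin_le
    (f := fun z => fderiv ℝ u z - A z)
    (f' := fun z => fderiv ℝ (fderiv ℝ u) z - A)
    (fun z hz => (((hu2 z hz).hasFDerivAt).sub A.hasFDerivAt).hasFDerivWithinAt)
    (fun z hz => hA z hz) hp hq
  have heq : fderiv ℝ u q - fderiv ℝ u p - A (q - p)
      = (fderiv ℝ u q - A q) - (fderiv ℝ u p - A p) := by
    rw [map_sub]; abel
  rw [heq]
  exact h

lemma bilin_le_of_unit (A : E →L[ℝ] E →L[ℝ] ℝ) {C : ℝ} (hC : 0 ≤ C)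
    (h : ∀ v w : E, ‖v‖ = 1 → ‖w‖ = 1 → |A w v| ≤ C) : ‖A‖ ≤ C := by
  apply ContinuousLinearMap.opNorm_le_of_unit_norm hC
  intro w hw
  apply ContinuousLinearMap.opNorm_le_of_unit_norm hC
  intro v hv
  rw [Real.norm_eq_abs]
  exact h v w hv hw

/-- Bound on a comparison bilinear map via a mixed second difference. -/
lemma snd_bound (u : E → ℝ) (y : E) {δ M κ : ℝ} (hδ : 0 < δ) (hM : 0 ≤ M)
    (hu1 : ∀ z ∈ closedBall y δ, DifferentiableAt ℝ u z)
    (hu2 : ∀ z ∈ closedBall y δ, DifferentiableAt ℝ (fderiv ℝ u) z)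
    (hub : ∀ z ∈ closedBall y δ, |u z| ≤ M)
    (A : E →L[ℝ] E →L[ℝ] ℝ)
    (hA : ∀ z ∈ closedBall y δ, ‖fderiv ℝ (fderiv ℝ u) z - A‖ ≤ κ) :
    ‖A‖ ≤ κ + 16 * M / δ ^ 2 := by
  have hκ : 0 ≤ κ := (norm_nonneg (fderiv ℝ (fderiv ℝ u) y - A)).trans (hA y (mem_closedBall_self hδ.le))
  have hC : 0 ≤ κ + 16 * M / δ ^ 2 := by positivity
  apply bilin_le_of_unit A hC
  intro v w hv hw
  set ρ := δ / 2 with hρdef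
  have hρ : 0 < ρ := by positivity
  have memC : ∀ s t : ℝ, 0 ≤ s → s ≤ ρ → 0 ≤ t → t ≤ ρ →
      y + s • v + t • w ∈ closedBall y δ := by
    intro s t hs hsρ ht htρ
    rw [mem_closedBall_iff_norm]
    have he : y + s • v + t • w - y = s • v + t • w := by abel
    rw [he]
    calc ‖s • v + t • w‖ ≤ ‖s • v‖ + ‖t • w‖ := norm_add_le _ _
      _ = |s| + |t| := by rw [norm_smul, norm_smul, hv, hw, Real.norm_eq_abs,
            Real.norm_eq_abs, mul_one, mul_one]
      _ ≤ ρ + ρ := by rw [abs_of_nonneg hs, abs_of_nonneg ht]; exact add_le_add hsρ htρ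
      _ = δ := by rw [hρdef]; ring
  set φ : ℝ → ℝ := fun s => u (y + s • v + ρ • w) - u (y + s • v) - s * (ρ * A w v)
    with hφdef
  have hconv : Convex ℝ (closedBall y δ) := convex_closedBall _ _
  have hder : ∀ s ∈ Icc (0:ℝ) ρ, HasDerivWithinAt φ
      (fderiv ℝ u (y + s • v + ρ • w) v - fderiv ℝ u (y + s • v) v - ρ * A w v)
      (Icc (0:ℝ) ρ) s := by
    intro s hs
    have hmem1 : y + s • v + ρ • w ∈ closedBall y δ := memC s ρ hs.1 hs.2 hρ.le le_rfl
    have hmem2 : y + s • v ∈ closedBall y δ := by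
      have := memC s 0 hs.1 hs.2 le_rfl hρ.le
      simpa using this
    have hin : HasDerivAt (fun s : ℝ => y + s • v + ρ • w) v s := by
      have h1 : HasDerivAt (fun s : ℝ => s • v) v s := by
        simpa using (hasDerivAt_id s).smul_const v
      simpa using (h1.const_add y).add_const (ρ • w)
    have hin2 : HasDerivAt (fun s : ℝ => y + s • v) v s := by
      have h1 : HasDerivAt (fun s : ℝ => s • v) v s := by
        simpa using (hasDerivAt_id s).smul_const v
      simpa using h1.const_add y
    have h1 : HasDerivAt (fun s : ℝ => u (y + s • v + ρ • w))
        (fderiv ℝ u (y + s • v + ρ • w) v) s :=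
      (hu1 _ hmem1).hasFDerivAt.comp_hasDerivAt s hin
    have h2 : HasDerivAt (fun s : ℝ => u (y + s • v))
        (fderiv ℝ u (y + s • v) v) s :=
      (hu1 _ hmem2).hasFDerivAt.comp_hasDerivAt s hin2
    have h3 : HasDerivAt (fun s : ℝ => s * (ρ * A w v)) (ρ * A w v) s :=
      hasDerivAt_mul_const _
    exact ((h1.sub h2).sub h3).hasDerivWithinAt
  have hbound : ∀ s ∈ Icc (0:ℝ) ρ,
      ‖fderiv ℝ u (y + s • v + ρ • w) v - fderiv ℝ u (y + s • v) v - ρ * A w v‖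
        ≤ κ * ρ := by
    intro s hs
    have hmem1 : y + s • v + ρ • w ∈ closedBall y δ := memC s ρ hs.1 hs.2 hρ.le le_rfl
    have hmem2 : y + s • v ∈ closedBall y δ := by
      have := memC s 0 hs.1 hs.2 le_rfl hρ.le
      simpa using this
    have hdiff : y + s • v + ρ • w - (y + s • v) = ρ • w := by abel
    have hmvt := mvt_cmp u hconv A hu2 hA hmem2 hmem1
    rw [hdiff] at hmvt
    have hnw : ‖ρ • w‖ = ρ := by
      rw [norm_smul, hw, Real.norm_eq_abs, abs_of_nonneg hρ.le, mul_one]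
    rw [hnw] at hmvt
    have key : fderiv ℝ u (y + s • v + ρ • w) v - fderiv ℝ u (y + s • v) v - ρ * A w v
        = (fderiv ℝ u (y + s • v + ρ • w) - fderiv ℝ u (y + s • v) - A (ρ • w)) v := by
      simp [map_smul, smul_eq_mul]
      try ring
    rw [key]
    calc ‖(fderiv ℝ u (y + s • v + ρ • w) - fderiv ℝ u (y + s • v) - A (ρ • w)) v‖
        ≤ ‖fderiv ℝ u (y + s • v + ρ • w) - fderiv ℝ u (y + s • v) - A (ρ • w)‖ * ‖v‖ :=
          ContinuousLinearMap.le_opNorm _ _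
      _ ≤ κ * ρ := by rw [hv, mul_one]; exact hmvt
  have hmvt1 := (convex_Icc (0:ℝ) ρ).norm_image_sub_le_of_norm_hasDerivWithin_le
    hder hbound (left_mem_Icc.2 hρ.le) (right_mem_Icc.2 hρ.le)
  have hφρ : φ ρ = u (y + ρ • v + ρ • w) - u (y + ρ • v) - ρ * (ρ * A w v) := rfl
  have hφ0 : φ 0 = u (y + ρ • w) - u y := by
    simp [hφdef]
  rw [hφρ, hφ0, sub_zero, Real.norm_eq_abs] at hmvt1
  have hsimp : κ * ρ * ‖ρ‖ = κ * ρ ^ 2 := by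
    rw [Real.norm_eq_abs, abs_of_nonneg hρ.le]; ring
  rw [hsimp] at hmvt1
  have hb1 : |u (y + ρ • v + ρ • w)| ≤ M := hub _ (memC ρ ρ hρ.le le_rfl hρ.le le_rfl)
  have hb2 : |u (y + ρ • v)| ≤ M := by
    apply hub
    have := memC ρ 0 hρ.le le_rfl le_rfl hρ.le
    simpa using this
  have hb3 : |u (y + ρ • w)| ≤ M := by
    apply hub
    have := memC 0 ρ le_rfl hρ.le hρ.le le_rfl
    simpa using this
  have hb4 : |u y| ≤ M := hub _ (mem_closedBall_self hδ.le)
  obtain ⟨hm1, hm2⟩ := abs_le.1 hmvt1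
  obtain ⟨hc1, hc2⟩ := abs_le.1 hb1
  obtain ⟨hd1, hd2⟩ := abs_le.1 hb2
  obtain ⟨he1, he2⟩ := abs_le.1 hb3
  obtain ⟨hf1, hf2⟩ := abs_le.1 hb4
  have h4 : ρ ^ 2 * |A w v| ≤ κ * ρ ^ 2 + 4 * M := by
    have e1 : ρ ^ 2 * |A w v| = |ρ * (ρ * A w v)| := by
      rw [abs_mul, abs_mul, abs_of_nonneg hρ.le]; ring
    rw [e1, abs_le]
    constructor <;> nlinarith [hm1, hm2, hc1, hc2, hd1, hd2, he1, he2, hf1, hf2]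
  have hδ2 : (0:ℝ) < δ ^ 2 := by positivity
  have h5 : |A w v| ≤ (κ * δ ^ 2 + 16 * M) / δ ^ 2 := by
    rw [le_div_iff₀ hδ2]
    have hρ2 : ρ ^ 2 = δ ^ 2 / 4 := by rw [hρdef]; ring
    rw [hρ2] at h4
    nlinarith [h4]
  calc |A w v| ≤ (κ * δ ^ 2 + 16 * M) / δ ^ 2 := h5
    _ = κ + 16 * M / δ ^ 2 := by field_simp

/-- Gradient bound at the center of a ball via an antisymmetric difference. -/
lemma fst_bound (u : E → ℝ) (y : E) {δ M κ : ℝ} (hδ : 0 < δ) (hM : 0 ≤ M)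
    (hu1 : ∀ z ∈ closedBall y δ, DifferentiableAt ℝ u z)
    (hu2 : ∀ z ∈ closedBall y δ, DifferentiableAt ℝ (fderiv ℝ u) z)
    (hub : ∀ z ∈ closedBall y δ, |u z| ≤ M)
    (hA : ∀ z ∈ closedBall y δ,
      ‖fderiv ℝ (fderiv ℝ u) z - fderiv ℝ (fderiv ℝ u) y‖ ≤ κ) :
    ‖fderiv ℝ u y‖ ≤ M / δ + κ * δ := by
  have hκ : 0 ≤ κ := (norm_nonneg (fderiv ℝ (fderiv ℝ u) y - fderiv ℝ (fderiv ℝ u) y)).trans (hA y (mem_closedBall_self hδ.le))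
  have hC : 0 ≤ M / δ + κ * δ := by positivity
  apply ContinuousLinearMap.opNorm_le_of_unit_norm hC
  intro v hv
  set A := fderiv ℝ (fderiv ℝ u) y with hAdef
  have hconv : Convex ℝ (closedBall y δ) := convex_closedBall _ _
  have memC : ∀ t : ℝ, |t| ≤ δ → ∀ z : E, ‖z‖ = 1 → y + t • z ∈ closedBall y δ := by
    intro t ht z hz
    rw [mem_closedBall_iff_norm]
    have he : y + t • z - y = t • z := by abel
    rw [he, norm_smul, hz, Real.norm_eq_abs, mul_one]
    exact ht
  have hnv : ‖-v‖ = 1 := by rw [norm_neg, hv]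
  set ψ : ℝ → ℝ := fun t => u (y + t • v) - u (y + t • (-v)) - t * (2 * fderiv ℝ u y v)
    with hψdef
  have hder : ∀ t ∈ Icc (0:ℝ) δ, HasDerivWithinAt ψ
      (fderiv ℝ u (y + t • v) v + fderiv ℝ u (y + t • (-v)) v - 2 * fderiv ℝ u y v)
      (Icc (0:ℝ) δ) t := by
    intro t ht
    have habs : |t| ≤ δ := by rw [abs_of_nonneg ht.1]; exact ht.2
    have hmem1 : y + t • v ∈ closedBall y δ := memC t habs v hv
    have hmem2 : y + t • (-v) ∈ closedBall y δ := memC t habs (-v) hnv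
    have hin1 : HasDerivAt (fun t : ℝ => y + t • v) v t := by
      have h1 : HasDerivAt (fun t : ℝ => t • v) v t := by
        simpa using (hasDerivAt_id t).smul_const v
      simpa using h1.const_add y
    have hin2 : HasDerivAt (fun t : ℝ => y + t • (-v)) (-v) t := by
      have h1 : HasDerivAt (fun t : ℝ => t • (-v)) (-v) t := by
        simpa using (hasDerivAt_id t).smul_const (-v)
      simpa using h1.const_add y
    have h1 : HasDerivAt (fun t : ℝ => u (y + t • v)) (fderiv ℝ u (y + t • v) v) t :=
      (hu1 _ hmem1).hasFDerivAt.comp_hasDerivAt t hin1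
    have h2 : HasDerivAt (fun t : ℝ => u (y + t • (-v)))
        (fderiv ℝ u (y + t • (-v)) (-v)) t :=
      (hu1 _ hmem2).hasFDerivAt.comp_hasDerivAt t hin2
    have h3 : HasDerivAt (fun t : ℝ => t * (2 * fderiv ℝ u y v)) (2 * fderiv ℝ u y v) t :=
      hasDerivAt_mul_const _
    have hcomb := (h1.sub h2).sub h3
    have heq : fderiv ℝ u (y + t • v) v - fderiv ℝ u (y + t • (-v)) (-v)
          - 2 * fderiv ℝ u y v
        = fderiv ℝ u (y + t • v) v + fderiv ℝ u (y + t • (-v)) v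
          - 2 * fderiv ℝ u y v := by
      rw [map_neg]; ring
    rw [heq] at hcomb
    exact hcomb.hasDerivWithinAt
  have hbound : ∀ t ∈ Icc (0:ℝ) δ,
      ‖fderiv ℝ u (y + t • v) v + fderiv ℝ u (y + t • (-v)) v - 2 * fderiv ℝ u y v‖
        ≤ κ * δ + κ * δ := by
    intro t ht
    have habs : |t| ≤ δ := by rw [abs_of_nonneg ht.1]; exact ht.2
    have hmem1 : y + t • v ∈ closedBall y δ := memC t habs v hv
    have hmem2 : y + t • (-v) ∈ closedBall y δ := memC t habs (-v) hnv
    have hyy : y ∈ closedBall y δ := mem_closedBall_self hδ.le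
    have hmvt1 := mvt_cmp u hconv A hu2 hA hyy hmem1
    have hmvt2 := mvt_cmp u hconv A hu2 hA hyy hmem2
    have hd1 : y + t • v - y = t • v := by abel
    have hd2 : y + t • (-v) - y = t • (-v) := by abel
    rw [hd1] at hmvt1
    rw [hd2] at hmvt2
    have hn1 : ‖t • v‖ = |t| := by rw [norm_smul, hv, Real.norm_eq_abs, mul_one]
    have hn2 : ‖t • (-v)‖ = |t| := by rw [norm_smul, hnv, Real.norm_eq_abs, mul_one]
    rw [hn1] at hmvt1
    rw [hn2] at hmvt2
    have hsplit : fderiv ℝ u (y + t • v) v + fderiv ℝ u (y + t • (-v)) v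
          - 2 * fderiv ℝ u y v
        = (fderiv ℝ u (y + t • v) - fderiv ℝ u y - A (t • v)) v
          + (fderiv ℝ u (y + t • (-v)) - fderiv ℝ u y - A (t • (-v))) v := by
      have : (t:ℝ) • (-v) = -(t • v) := by rw [smul_neg]
      simp [this, map_neg]
      try ring
    rw [hsplit]
    have hterm1 : ‖(fderiv ℝ u (y + t • v) - fderiv ℝ u y - A (t • v)) v‖ ≤ κ * δ := by
      calc ‖(fderiv ℝ u (y + t • v) - fderiv ℝ u y - A (t • v)) v‖
          ≤ ‖fderiv ℝ u (y + t • v) - fderiv ℝ u y - A (t • v)‖ * ‖v‖ :=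
            ContinuousLinearMap.le_opNorm _ _
        _ ≤ (κ * |t|) * 1 := mul_le_mul hmvt1 (le_of_eq hv) (norm_nonneg _)
              (by positivity)
        _ ≤ κ * δ := by rw [mul_one]; exact mul_le_mul_of_nonneg_left habs hκ
    have hterm2 : ‖(fderiv ℝ u (y + t • (-v)) - fderiv ℝ u y - A (t • (-v))) v‖ ≤ κ * δ := by
      calc ‖(fderiv ℝ u (y + t • (-v)) - fderiv ℝ u y - A (t • (-v))) v‖
          ≤ ‖fderiv ℝ u (y + t • (-v)) - fderiv ℝ u y - A (t • (-v))‖ * ‖v‖ :=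
            ContinuousLinearMap.le_opNorm _ _
        _ ≤ (κ * |t|) * 1 := mul_le_mul hmvt2 (le_of_eq hv) (norm_nonneg _)
              (by positivity)
        _ ≤ κ * δ := by rw [mul_one]; exact mul_le_mul_of_nonneg_left habs hκ
    calc ‖(fderiv ℝ u (y + t • v) - fderiv ℝ u y - A (t • v)) v
          + (fderiv ℝ u (y + t • (-v)) - fderiv ℝ u y - A (t • (-v))) v‖
        ≤ _ + _ := norm_add_le _ _
      _ ≤ κ * δ + κ * δ := add_le_add hterm1 hterm2
  have hmvt := (convex_Icc (0:ℝ) δ).norm_image_sub_le_of_norm_hasDerivWithin_le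
    hder hbound (left_mem_Icc.2 hδ.le) (right_mem_Icc.2 hδ.le)
  have hψδ : ψ δ = u (y + δ • v) - u (y + δ • (-v)) - δ * (2 * fderiv ℝ u y v) := rfl
  have hψ0 : ψ 0 = 0 := by simp [hψdef]
  rw [hψδ, hψ0, sub_zero, Real.norm_eq_abs] at hmvt
  have hsimp : (κ * δ + κ * δ) * ‖δ - (0:ℝ)‖ = 2 * κ * δ ^ 2 := by
    rw [sub_zero, Real.norm_eq_abs, abs_of_nonneg hδ.le]; ring
  rw [hsimp] at hmvt
  have hb1 : |u (y + δ • v)| ≤ M := hub _ (memC δ (by rw [abs_of_nonneg hδ.le]) v hv)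
  have hb2 : |u (y + δ • (-v))| ≤ M := hub _ (memC δ (by rw [abs_of_nonneg hδ.le]) (-v) hnv)
  obtain ⟨hm1, hm2⟩ := abs_le.1 hmvt
  obtain ⟨hc1, hc2⟩ := abs_le.1 hb1
  obtain ⟨hd1, hd2⟩ := abs_le.1 hb2
  have h4 : δ * |fderiv ℝ u y v| ≤ M + κ * δ ^ 2 := by
    have e1 : 2 * (δ * |fderiv ℝ u y v|) = |δ * (2 * fderiv ℝ u y v)| := by
      rw [abs_mul, abs_mul, abs_of_nonneg hδ.le]
      simp [abs_of_nonneg]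
      ring
    have : |δ * (2 * fderiv ℝ u y v)| ≤ 2 * M + 2 * κ * δ ^ 2 := by
      rw [abs_le]
      constructor <;> nlinarith [hm1, hm2, hc1, hc2, hd1, hd2]
    nlinarith [this, e1]
  rw [Real.norm_eq_abs]
  calc |fderiv ℝ u y v| ≤ (M + κ * δ ^ 2) / δ := by
        rw [le_div_iff₀ hδ]; linarith [h4]
    _ = M / δ + κ * δ := by field_simp

/-- Geometric lemma: inside a big ball, around every point there is a small ball
containing it. -/
lemma exists_small_ball (x₀ x e₀ : E) (he₀ : ‖e₀‖ = 1) {r δ : ℝ} (hδ : 0 < δ)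
    (h2 : 2 * δ ≤ r) (hx : x ∈ closedBall x₀ r) :
    ∃ y : E, x ∈ closedBall y δ ∧ closedBall y δ ⊆ closedBall x₀ r := by
  by_cases hz : x = x₀
  · refine ⟨x₀ + δ • e₀, ?_, ?_⟩
    · rw [hz, mem_closedBall_iff_norm]
      have he : x₀ - (x₀ + δ • e₀) = -(δ • e₀) := by abel
      rw [he, norm_neg, norm_smul, he₀, Real.norm_eq_abs, abs_of_nonneg hδ.le, mul_one]
    · apply closedBall_subset_closedBall'
      have : dist (x₀ + δ • e₀) x₀ = δ := by
        rw [dist_eq_norm]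
        have he : x₀ + δ • e₀ - x₀ = δ • e₀ := by abel
        rw [he, norm_smul, he₀, Real.norm_eq_abs, abs_of_nonneg hδ.le, mul_one]
      rw [this]; linarith
  · set s := ‖x₀ - x‖ with hsdef
    have hs : 0 < s := by
      rw [hsdef, norm_pos_iff, sub_ne_zero]
      exact fun h => hz h.symm
    set e : E := s⁻¹ • (x₀ - x) with hedef
    have he : ‖e‖ = 1 := by
      rw [hedef, norm_smul, Real.norm_eq_abs, abs_of_nonneg (inv_nonneg.2 hs.le),
        ← hsdef, inv_mul_cancel₀ hs.ne']
    refine ⟨x + δ • e, ?_, ?_⟩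
    · rw [mem_closedBall_iff_norm]
      have hee : x - (x + δ • e) = -(δ • e) := by abel
      rw [hee, norm_neg, norm_smul, he, Real.norm_eq_abs, abs_of_nonneg hδ.le, mul_one]
    · apply closedBall_subset_closedBall'
      have hdist : dist (x + δ • e) x₀ = |s - δ| := by
        rw [dist_eq_norm]
        have hee : x + δ • e - x₀ = (1 - δ * s⁻¹) • (x - x₀) := by
          rw [hedef]; module
        rw [hee, norm_smul, Real.norm_eq_abs]
        have hxx : ‖x - x₀‖ = s := by rw [hsdef, norm_sub_rev]
        rw [hxx]
        have h' : (1 - δ * s⁻¹) * s = s - δ := by field_simp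
        calc |1 - δ * s⁻¹| * s = |(1 - δ * s⁻¹) * s| := by
              rw [abs_mul, abs_of_nonneg hs.le]
          _ = |s - δ| := by rw [h']
      have hsr : s ≤ r := by
        rw [hsdef, norm_sub_rev, ← dist_eq_norm]
        exact mem_closedBall.1 hx
      rw [hdist]
      rcases le_or_gt δ s with hc | hc
      · rw [abs_of_nonneg (by linarith)]; linarith
      · rw [abs_of_neg (by linarith)]; linarith

end Helpers

/-- Interpolation inequalities on balls for `C^{2+α}` functions: there is a dimensional
constant `c_d > 0` such that for every ball `B` of radius `r`, every `u` bounded by `M`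
on `B` whose second derivative is `α`-Hölder with constant `H` on `B`, and every
`ε ∈ (0, r]`, one has `‖Du‖ ≤ ε^{1+α} H + (c_d/ε) M` and
`‖D²u‖ ≤ ε^α H + (c_d/ε²) M` on `B`. -/
theorem interpolation_inequalities_C2alpha
    (d : ℕ) (hd : 1 ≤ d) :
    ∃ c : ℝ, 0 < c ∧
      ∀ (α r : ℝ), α ∈ Set.Ioo (0:ℝ) 1 → 0 < r →
      ∀ (x₀ : EuclideanSpace ℝ (Fin d)) (u : EuclideanSpace ℝ (Fin d) → ℝ) (M H : ℝ),
        (∀ x ∈ Metric.closedBall x₀ r, DifferentiableAt ℝ u x) →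
        (∀ x ∈ Metric.closedBall x₀ r, DifferentiableAt ℝ (fderiv ℝ u) x) →
        (∀ x ∈ Metric.closedBall x₀ r, |u x| ≤ M) →
        (∀ x ∈ Metric.closedBall x₀ r, ∀ y ∈ Metric.closedBall x₀ r,
          ‖fderiv ℝ (fderiv ℝ u) x - fderiv ℝ (fderiv ℝ u) y‖ ≤ H * ‖x - y‖ ^ α) →
        ∀ ε : ℝ, 0 < ε → ε ≤ r →
          (∀ x ∈ Metric.closedBall x₀ r,
            ‖fderiv ℝ u x‖ ≤ ε ^ (1 + α) * H + (c / ε) * M) ∧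
          (∀ x ∈ Metric.closedBall x₀ r,
            ‖fderiv ℝ (fderiv ℝ u) x‖ ≤ ε ^ α * H + (c / ε ^ 2) * M) := by
  refine ⟨68, by norm_num, ?_⟩
  intro α r hα hr x₀ u M H hu1 hu2 hub hHol ε hε hεr
  set e₀ : EuclideanSpace ℝ (Fin d) := EuclideanSpace.single (⟨0, hd⟩ : Fin d) (1:ℝ)
    with he₀def
  have he₀ : ‖e₀‖ = 1 := by
    rw [he₀def, EuclideanSpace.norm_single, norm_one]
  have hM : 0 ≤ M := (abs_nonneg _).trans (hub x₀ (mem_closedBall_self hr.le))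
  have hH : 0 ≤ H := by
    have hp : x₀ + r • e₀ ∈ closedBall x₀ r := by
      rw [mem_closedBall_iff_norm]
      have he : x₀ + r • e₀ - x₀ = r • e₀ := by abel
      rw [he, norm_smul, he₀, Real.norm_eq_abs, abs_of_nonneg hr.le, mul_one]
    have h0 := hHol (x₀ + r • e₀) hp x₀ (mem_closedBall_self hr.le)
    have hnr : ‖x₀ + r • e₀ - x₀‖ = r := by
      have he : x₀ + r • e₀ - x₀ = r • e₀ := by abel
      rw [he, norm_smul, he₀, Real.norm_eq_abs, abs_of_nonneg hr.le, mul_one]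
    rw [hnr] at h0
    have h1 : (0:ℝ) ≤ H * r ^ α := (norm_nonneg (fderiv ℝ (fderiv ℝ u) (x₀ + r • e₀) - fderiv ℝ (fderiv ℝ u) x₀)).trans h0
    have hrα : (0:ℝ) < r ^ α := Real.rpow_pos_of_pos hr α
    nlinarith [h1, hrα]
  have hεα : (0:ℝ) ≤ ε ^ α := Real.rpow_nonneg hε.le α
  constructor
  · -- first derivative bound
    intro x hx
    obtain ⟨y, hxy, hsub⟩ := exists_small_ball x₀ x e₀ he₀ (r := r) (δ := ε/4)
      (by positivity) (by linarith) hx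
    have hδ : (0:ℝ) < ε/4 := by positivity
    have hy : y ∈ closedBall x₀ r := hsub (mem_closedBall_self hδ.le)
    have hA : ∀ z ∈ closedBall y (ε/4),
        ‖fderiv ℝ (fderiv ℝ u) z - fderiv ℝ (fderiv ℝ u) y‖ ≤ H * (ε/4) ^ α := by
      intro z hz
      have hzB := hsub hz
      have hzy : ‖z - y‖ ≤ ε/4 := mem_closedBall_iff_norm.1 hz
      calc ‖fderiv ℝ (fderiv ℝ u) z - fderiv ℝ (fderiv ℝ u) y‖
          ≤ H * ‖z - y‖ ^ α := hHol z hzB y hy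
        _ ≤ H * (ε/4) ^ α := by
            apply mul_le_mul_of_nonneg_left _ hH
            exact Real.rpow_le_rpow (norm_nonneg _) hzy hα.1.le
    have hκ : (0:ℝ) ≤ H * (ε/4) ^ α := by
      apply mul_nonneg hH (Real.rpow_nonneg hδ.le α)
    have h1 := fst_bound u y hδ hM (fun z hz => hu1 z (hsub hz))
      (fun z hz => hu2 z (hsub hz)) (fun z hz => hub z (hsub hz)) hA
    have h2 := snd_bound u y hδ hM (fun z hz => hu1 z (hsub hz))
      (fun z hz => hu2 z (hsub hz)) (fun z hz => hub z (hsub hz))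
      (fderiv ℝ (fderiv ℝ u) y) hA
    have h3 := mvt_cmp u (convex_closedBall y (ε/4)) (fderiv ℝ (fderiv ℝ u) y)
      (fun z hz => hu2 z (hsub hz)) hA (mem_closedBall_self hδ.le) hxy
    have hxyn : ‖x - y‖ ≤ ε/4 := mem_closedBall_iff_norm.1 hxy
    have hdecomp : fderiv ℝ u x
        = (fderiv ℝ u x - fderiv ℝ u y - fderiv ℝ (fderiv ℝ u) y (x - y))
          + fderiv ℝ (fderiv ℝ u) y (x - y) + fderiv ℝ u y := by abel
    have hb1 : ‖fderiv ℝ u x - fderiv ℝ u y - fderiv ℝ (fderiv ℝ u) y (x - y)‖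
        ≤ H * (ε/4) ^ α * (ε/4) := by
      calc ‖fderiv ℝ u x - fderiv ℝ u y - fderiv ℝ (fderiv ℝ u) y (x - y)‖
          ≤ H * (ε/4) ^ α * ‖x - y‖ := h3
        _ ≤ H * (ε/4) ^ α * (ε/4) := mul_le_mul_of_nonneg_left hxyn hκ
    have hb2 : ‖fderiv ℝ (fderiv ℝ u) y (x - y)‖
        ≤ (H * (ε/4) ^ α + 16 * M / (ε/4) ^ 2) * (ε/4) := by
      calc ‖fderiv ℝ (fderiv ℝ u) y (x - y)‖
          ≤ ‖fderiv ℝ (fderiv ℝ u) y‖ * ‖x - y‖ := ContinuousLinearMap.le_opNorm _ _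
        _ ≤ (H * (ε/4) ^ α + 16 * M / (ε/4) ^ 2) * (ε/4) :=
            mul_le_mul h2 hxyn (norm_nonneg _) (by positivity)
    have htot : ‖fderiv ℝ u x‖
        ≤ H * (ε/4) ^ α * (ε/4) + (H * (ε/4) ^ α + 16 * M / (ε/4) ^ 2) * (ε/4)
          + (M / (ε/4) + H * (ε/4) ^ α * (ε/4)) := by
      rw [hdecomp]
      have htri := norm_add₃_le (a := fderiv ℝ u x - fderiv ℝ u y
        - fderiv ℝ (fderiv ℝ u) y (x - y)) (b := fderiv ℝ (fderiv ℝ u) y (x - y))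
        (c := fderiv ℝ u y)
      linarith [htri, hb1, hb2, h1]
    have hsplit : ε ^ ((1:ℝ) + α) = ε * ε ^ α := by
      rw [Real.rpow_add hε, Real.rpow_one]
    have hcmp : ((ε/4:ℝ)) ^ α ≤ ε ^ α :=
      Real.rpow_le_rpow (by positivity) (by linarith) hα.1.le
    have hHcmp : H * (ε/4) ^ α ≤ H * ε ^ α := mul_le_mul_of_nonneg_left hcmp hH
    have eM : M / (ε/4) + 16 * M / (ε/4) ^ 2 * (ε/4) = 68 / ε * M := by
      field_simp
      ring
    have hHterm : H * (ε/4) ^ α * (ε/4) + H * (ε/4) ^ α * (ε/4)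
        + H * (ε/4) ^ α * (ε/4) ≤ ε ^ ((1:ℝ) + α) * H := by
      rw [hsplit]
      nlinarith [mul_le_mul_of_nonneg_left hHcmp hε.le,
        mul_nonneg (mul_nonneg hε.le hH) (Real.rpow_nonneg hδ.le α)]
    calc ‖fderiv ℝ u x‖
        ≤ H * (ε/4) ^ α * (ε/4) + (H * (ε/4) ^ α + 16 * M / (ε/4) ^ 2) * (ε/4)
          + (M / (ε/4) + H * (ε/4) ^ α * (ε/4)) := htot
      _ = (H * (ε/4) ^ α * (ε/4) + H * (ε/4) ^ α * (ε/4) + H * (ε/4) ^ α * (ε/4))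
          + (M / (ε/4) + 16 * M / (ε/4) ^ 2 * (ε/4)) := by ring
      _ ≤ ε ^ ((1:ℝ) + α) * H + 68 / ε * M := by
          rw [eM]
          exact add_le_add hHterm le_rfl
  · -- second derivative bound
    intro x hx
    obtain ⟨y, hxy, hsub⟩ := exists_small_ball x₀ x e₀ he₀ (r := r) (δ := ε/2)
      (by positivity) (by linarith) hx
    have hδ : (0:ℝ) < ε/2 := by positivity
    have hA : ∀ z ∈ closedBall y (ε/2),
        ‖fderiv ℝ (fderiv ℝ u) z - fderiv ℝ (fderiv ℝ u) x‖ ≤ H * ε ^ α := by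
      intro z hz
      have hzB := hsub hz
      have hzx : ‖z - x‖ ≤ ε := by
        have h1 : ‖z - y‖ ≤ ε/2 := mem_closedBall_iff_norm.1 hz
        have h2 : ‖y - x‖ ≤ ε/2 := by
          rw [norm_sub_rev]; exact mem_closedBall_iff_norm.1 hxy
        calc ‖z - x‖ = ‖(z - y) + (y - x)‖ := by abel_nf
          _ ≤ ‖z - y‖ + ‖y - x‖ := norm_add_le _ _
          _ ≤ ε := by linarith
      calc ‖fderiv ℝ (fderiv ℝ u) z - fderiv ℝ (fderiv ℝ u) x‖
          ≤ H * ‖z - x‖ ^ α := hHol z hzB x hx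
        _ ≤ H * ε ^ α := by
            apply mul_le_mul_of_nonneg_left _ hH
            exact Real.rpow_le_rpow (norm_nonneg _) hzx hα.1.le
    have h2 := snd_bound u y hδ hM (fun z hz => hu1 z (hsub hz))
      (fun z hz => hu2 z (hsub hz)) (fun z hz => hub z (hsub hz))
      (fderiv ℝ (fderiv ℝ u) x) hA
    have e3 : 16 * M / ((ε/2) ^ 2) = 64 * M / ε ^ 2 := by
      field_simp
      ring
    have e4 : 64 * M / ε ^ 2 ≤ 68 / ε ^ 2 * M := by
      have h5 : 68 / ε ^ 2 * M - 64 * M / ε ^ 2 = 4 * M / ε ^ 2 := by ring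
      have h6 : (0:ℝ) ≤ 4 * M / ε ^ 2 := by positivity
      linarith
    calc ‖fderiv ℝ (fderiv ℝ u) x‖ ≤ H * ε ^ α + 16 * M / (ε/2) ^ 2 := h2
      _ = H * ε ^ α + 64 * M / ε ^ 2 := by rw [e3]
      _ ≤ ε ^ α * H + 68 / ε ^ 2 * M := by
          rw [mul_comm (ε ^ α) H]
          exact add_le_add le_rfl e4
end

section
/- Let d ≥ 1 and let Ω ⊆ ℝ^d be a bounded open set satisfying the interior cone condition with opening angle θ ∈ (0, π/2] and height h > 0: for every x ∈ Ω there exists a unit vector e ∈ ℝ^d such that {x + y : y ∈ ℝ^d, 0 < ‖y‖ ≤ h, ⟨y, e⟩ ≥ ‖y‖·cos θ} ⊆ Ω. Let α ∈ (0,1). Then there exist constants c₇, c₈ > 0, depending only on d, θ and α, such that for every function u : ℝ^d → ℝ that is twice differentiable on Ω with |u(x)| ≤ M on Ω and whose second derivative D²u is α-Hölder with constant H on Ω, and for every ε ∈ (0, h]: sup_{x ∈ Ω} ‖Du(x)‖ ≤ ε^{1+α}·H + (c₇/ε)·M and sup_{x ∈ Ω} ‖D²u(x)‖ ≤ ε^α·H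 + (c₈/ε²)·M. -/
open scoped RealInnerProductSpace
open Set

variable {E : Type*} [NormedAddCommGroup E] [InnerProductSpace ℝ E]

/-- norm bound for a linear functional from unit vectors -/
lemma lin_of_unit (T : E →L[ℝ] ℝ) {C : ℝ} (hC : 0 ≤ C)
    (h : ∀ v : E, ‖v‖ = 1 → |T v| ≤ C) : ‖T‖ ≤ C := by
  refine T.opNorm_le_bound hC (fun v => ?_)
  rcases eq_or_ne v 0 with rfl | hv
  · simp
  · have hnv : (0:ℝ) < ‖v‖ := norm_pos_iff.mpr hv
    have hu : ‖(‖v‖⁻¹ • v)‖ = 1 := by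
      rw [norm_smul, norm_inv, norm_norm]; field_simp
    have := h _ hu
    have hTv : T (‖v‖⁻¹ • v) = ‖v‖⁻¹ * T v := by simp
    rw [hTv, abs_mul, abs_inv, abs_norm] at this
    calc ‖T v‖ = ‖v‖ * (‖v‖⁻¹ * |T v|) := by rw [Real.norm_eq_abs]; field_simp
    _ ≤ ‖v‖ * C := by
        exact mul_le_mul_of_nonneg_left this (norm_nonneg v)
    _ = C * ‖v‖ := mul_comm _ _

lemma quad_of_unit (B : E →L[ℝ] E →L[ℝ] ℝ) {C : ℝ} (hC : 0 ≤ C)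
    (h : ∀ v : E, ‖v‖ = 1 → |B v v| ≤ C) : ∀ z : E, |B z z| ≤ C * ‖z‖ ^ 2 := by
  intro z
  rcases eq_or_ne z 0 with rfl | hz
  · simp
  · have hnz : (0:ℝ) < ‖z‖ := norm_pos_iff.mpr hz
    have hu : ‖(‖z‖⁻¹ • z)‖ = 1 := by rw [norm_smul, norm_inv, norm_norm]; field_simp
    have := h _ hu
    have hBz : B (‖z‖⁻¹ • z) (‖z‖⁻¹ • z) = ‖z‖⁻¹ * (‖z‖⁻¹ * B z z) := by simp
    rw [hBz, abs_mul, abs_mul, abs_inv, abs_norm] at this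
    have h2 : |B z z| = ‖z‖ ^ 2 * (‖z‖⁻¹ * (‖z‖⁻¹ * |B z z|)) := by field_simp
    rw [h2]
    calc ‖z‖ ^ 2 * (‖z‖⁻¹ * (‖z‖⁻¹ * |B z z|)) ≤ ‖z‖ ^ 2 * C := by
          apply mul_le_mul_of_nonneg_left _ (sq_nonneg _)
          simpa [mul_assoc] using this
    _ = C * ‖z‖ ^ 2 := mul_comm _ _

lemma bilin_of_unit (B : E →L[ℝ] E →L[ℝ] ℝ) {C : ℝ} (hC : 0 ≤ C)
    (h : ∀ v w : E, ‖v‖ = 1 → ‖w‖ = 1 → |B v w| ≤ C) : ‖B‖ ≤ C := by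
  refine B.opNorm_le_bound hC (fun v => ?_)
  refine (B v).opNorm_le_bound (by positivity) (fun w => ?_)
  rcases eq_or_ne v 0 with rfl | hv
  · simp
  rcases eq_or_ne w 0 with rfl | hw
  · simp
  have hnv : (0:ℝ) < ‖v‖ := norm_pos_iff.mpr hv
  have hnw : (0:ℝ) < ‖w‖ := norm_pos_iff.mpr hw
  have huv : ‖(‖v‖⁻¹ • v)‖ = 1 := by rw [norm_smul, norm_inv, norm_norm]; field_simp
  have huw : ‖(‖w‖⁻¹ • w)‖ = 1 := by rw [norm_smul, norm_inv, norm_norm]; field_simp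
  have := h _ _ huv huw
  have hBz : B (‖v‖⁻¹ • v) (‖w‖⁻¹ • w) = ‖v‖⁻¹ * (‖w‖⁻¹ * B v w) := by
    simp [mul_comm, mul_left_comm]
  rw [hBz, abs_mul, abs_mul, abs_inv, abs_inv, abs_norm, abs_norm] at this
  have h3 : ‖v‖⁻¹ * (‖w‖⁻¹ * |B v w|) ≤ C := this
  have h2 : ‖B v w‖ = ‖v‖ * ‖w‖ * (‖v‖⁻¹ * (‖w‖⁻¹ * |B v w|)) := by
    rw [Real.norm_eq_abs]; field_simp
  rw [h2]
  calc ‖v‖ * ‖w‖ * (‖v‖⁻¹ * (‖w‖⁻¹ * |B v w|)) ≤ ‖v‖ * ‖w‖ * C :=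
        mul_le_mul_of_nonneg_left h3 (by positivity)
  _ = C * ‖v‖ * ‖w‖ := by ring

lemma unit_decomp {e v : E} (he : ‖e‖ = 1) (hv : ‖v‖ = 1) :
    (∃ a : ℝ, |a| ≤ 1 ∧ v = a • e) ∨
    (∃ a b : ℝ, ∃ f : E, |a| ≤ 1 ∧ |b| ≤ 1 ∧ ‖f‖ = 1 ∧ ⟪f, e⟫ = 0 ∧ v = a • e + b • f) := by
  set a : ℝ := ⟪v, e⟫ with ha
  set P : E := v - a • e with hP
  have hee : ⟪e, e⟫ = 1 := by
    rw [real_inner_self_eq_norm_sq, he]; norm_num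
  have hPe : ⟪P, e⟫ = 0 := by
    rw [hP, inner_sub_left, real_inner_smul_left, hee]; ring
  have hsum : a ^ 2 + ‖P‖ ^ 2 = 1 := by
    have hv2 : v = a • e + P := by rw [hP]; abel
    have : ‖v‖ ^ 2 = ‖a • e‖ ^ 2 + 2 * ⟪a • e, P⟫ + ‖P‖ ^ 2 := by
      rw [hv2]; rw [norm_add_sq_real]
    have heP : ⟪a • e, P⟫ = 0 := by
      rw [real_inner_smul_left, real_inner_comm, hPe]; ring
    rw [heP, hv, norm_smul, he] at this
    simp only [Real.norm_eq_abs, mul_one, mul_zero, add_zero] at this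
    rw [sq_abs] at this
    linarith
  have ha1 : |a| ≤ 1 := by
    rw [← sq_le_one_iff_abs_le_one]; nlinarith [sq_nonneg ‖P‖]
  rcases eq_or_ne P 0 with h0 | h0
  · left
    exact ⟨a, ha1, by rw [← sub_eq_zero, ← hP, h0]⟩
  · right
    have hnP : (0:ℝ) < ‖P‖ := norm_pos_iff.mpr h0
    refine ⟨a, ‖P‖, ‖P‖⁻¹ • P, ha1, ?_, ?_, ?_, ?_⟩
    · rw [abs_norm]; nlinarith [norm_nonneg P, sq_nonneg a]
    · rw [norm_smul, norm_inv, norm_norm]; field_simp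
    · rw [real_inner_smul_left, hPe]; ring
    · rw [smul_smul]
      rw [mul_inv_cancel₀ (ne_of_gt hnP), one_smul, hP]; abel

lemma cone_lin (T : E →L[ℝ] ℝ) {e : E} (he : ‖e‖ = 1) {θ S : ℝ}
    (hθ0 : 0 < θ) (hθ1 : θ ≤ Real.pi / 2) (hS : 0 ≤ S)
    (h : ∀ w : E, ‖w‖ = 1 → Real.cos θ ≤ ⟪w, e⟫ → |T w| ≤ S) :
    ‖T‖ ≤ (1 + 1 / Real.sin (θ / 2)) * S := by
  set s : ℝ := Real.sin (θ / 2) with hs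
  set c : ℝ := Real.cos (θ / 2) with hc
  have hθpi : θ ≤ Real.pi := le_trans hθ1 (by linarith [Real.pi_pos])
  have hspos : 0 < s := Real.sin_pos_of_pos_of_lt_pi (by linarith) (by linarith [Real.pi_pos])
  have hcpos : 0 < c := Real.cos_pos_of_mem_Ioo ⟨by linarith [Real.pi_pos], by linarith⟩
  have hcs : c ^ 2 + s ^ 2 = 1 := by
    rw [hc, hs]; rw [add_comm]; exact Real.sin_sq_add_cos_sq _
  have hcge : Real.cos θ ≤ c := by
    rw [hc]; exact Real.cos_le_cos_of_nonneg_of_le_pi (by linarith) hθpi (by linarith)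
  have hTe : |T e| ≤ S := by
    refine h e he ?_
    rw [real_inner_self_eq_norm_sq, he]
    calc Real.cos θ ≤ 1 := Real.cos_le_one θ
    _ = 1 ^ 2 := by norm_num
  refine lin_of_unit T (by positivity) (fun v hv => ?_)
  rcases unit_decomp he hv with ⟨a, ha1, rfl⟩ | ⟨a, b, f, ha1, hb1, hf, hfe, rfl⟩
  · rw [map_smul]
    simp only [smul_eq_mul, abs_mul]
    calc |a| * |T e| ≤ 1 * S := mul_le_mul ha1 hTe (abs_nonneg _) zero_le_one
    _ ≤ (1 + 1 / s) * S := by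
        apply mul_le_mul_of_nonneg_right _ hS
        have : 0 < 1 / s := by positivity
        linarith
  · -- key: bound |T f|
    have hfe2 : ⟪e, f⟫ = 0 := by rw [real_inner_comm]; exact hfe
    have hee : ⟪e, e⟫ = 1 := by rw [real_inner_self_eq_norm_sq, he]; norm_num
    have hff : ⟪f, f⟫ = 1 := by rw [real_inner_self_eq_norm_sq, hf]; norm_num
    have hwnorm : ∀ t : ℝ, ‖c • e + t • f‖ ^ 2 = c ^ 2 + t ^ 2 := by
      intro t
      rw [norm_add_sq_real, real_inner_smul_left, real_inner_smul_right, hfe2,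
        norm_smul, norm_smul, he, hf]
      simp [mul_pow, sq_abs]
    have hwu : ∀ t : ℝ, t ^ 2 = s ^ 2 → ‖c • e + t • f‖ = 1 := by
      intro t ht
      have h1 : ‖c • e + t • f‖ ^ 2 = 1 := by rw [hwnorm t, ht]; exact hcs
      nlinarith [norm_nonneg (c • e + t • f)]
    have hwin : ∀ t : ℝ, Real.cos θ ≤ ⟪c • e + t • f, e⟫ := by
      intro t
      rw [inner_add_left, real_inner_smul_left, real_inner_smul_left, hee, hfe]
      calc Real.cos θ ≤ c := hcge
      _ = c * 1 + t * 0 := by ring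
    have hwp := h (c • e + s • f) (hwu s rfl) (hwin s)
    have hwm := h (c • e + (-s) • f) (hwu (-s) (by ring)) (hwin (-s))
    have hTf : |T f| ≤ S / s := by
      have hdiff : T (c • e + s • f) - T (c • e + (-s) • f) = 2 * s * T f := by
        simp only [map_add, map_smul, smul_eq_mul]; ring
      have : |2 * s * T f| ≤ 2 * S := by
        rw [← hdiff]
        calc |T (c • e + s • f) - T (c • e + (-s) • f)| ≤
            |T (c • e + s • f)| + |T (c • e + (-s) • f)| := abs_sub _ _
        _ ≤ 2 * S := by linarith
      rw [abs_mul, abs_mul] at this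
      rw [abs_of_pos hspos] at this
      simp only [abs_two] at this
      rw [le_div_iff₀ hspos]
      nlinarith
    rw [map_add, map_smul, map_smul]
    simp only [smul_eq_mul]
    calc |a * T e + b * T f| ≤ |a| * |T e| + |b| * |T f| := by
          calc _ ≤ |a * T e| + |b * T f| := abs_add_le _ _
          _ = _ := by rw [abs_mul, abs_mul]
    _ ≤ 1 * S + 1 * (S / s) := by
        have h1 : |a| * |T e| ≤ 1 * S := mul_le_mul ha1 hTe (abs_nonneg _) zero_le_one
        have h2 : |b| * |T f| ≤ 1 * (S / s) := mul_le_mul hb1 hTf (abs_nonneg _) zero_le_one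
        linarith
    _ = (1 + 1 / s) * S := by field_simp

set_option maxHeartbeats 1000000 in
lemma cone_bilin (B : E →L[ℝ] E →L[ℝ] ℝ) (hsymm : ∀ v w : E, B v w = B w v)
    {e : E} (he : ‖e‖ = 1) {θ S : ℝ}
    (hθ0 : 0 < θ) (hθ1 : θ ≤ Real.pi / 2) (hS : 0 ≤ S)
    (h : ∀ w : E, ‖w‖ = 1 → Real.cos θ ≤ ⟪w, e⟫ → |B w w| ≤ S) :
    ‖B‖ ≤ (1 + 2 / (Real.cos (θ / 2) * Real.sin (θ / 2)) + 3 / Real.sin (θ / 2) ^ 2) * S := by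
  set s : ℝ := Real.sin (θ / 2) with hs
  set c : ℝ := Real.cos (θ / 2) with hc
  have hθpi : θ ≤ Real.pi := le_trans hθ1 (by linarith [Real.pi_pos])
  have hspos : 0 < s := Real.sin_pos_of_pos_of_lt_pi (by linarith) (by linarith [Real.pi_pos])
  have hcpos : 0 < c := Real.cos_pos_of_mem_Ioo ⟨by linarith [Real.pi_pos], by linarith⟩
  have hcs : c ^ 2 + s ^ 2 = 1 := by rw [hc, hs, add_comm]; exact Real.sin_sq_add_cos_sq _
  have hcge : Real.cos θ ≤ c := by
    rw [hc]; exact Real.cos_le_cos_of_nonneg_of_le_pi (by linarith) hθpi (by linarith)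
  have hc1 : c ≤ 1 := by rw [hc]; exact Real.cos_le_one _
  set CQ : ℝ := 1 + 2 / (c * s) + 3 / s ^ 2 with hCQ
  have hCQ1 : 1 ≤ CQ := by
    have h1 : 0 < 2 / (c * s) := by positivity
    have h2 : 0 < 3 / s ^ 2 := by positivity
    rw [hCQ]; linarith
  have hQe : |B e e| ≤ S := by
    refine h e he ?_
    rw [real_inner_self_eq_norm_sq, he]
    calc Real.cos θ ≤ 1 := Real.cos_le_one θ
    _ = 1 ^ 2 := by norm_num
  -- quadratic bound on unit vectors
  have hQunit : ∀ v : E, ‖v‖ = 1 → |B v v| ≤ CQ * S := by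
    intro v hv
    rcases unit_decomp he hv with ⟨a, ha1, rfl⟩ | ⟨a, b, f, ha1, hb1, hf, hfe, rfl⟩
    · have : B (a • e) (a • e) = a * (a * B e e) := by
        rw [map_smul]; simp
      rw [this, abs_mul, abs_mul]
      calc |a| * (|a| * |B e e|) ≤ 1 * (1 * S) := by
            apply mul_le_mul ha1 _ (by positivity) zero_le_one
            exact mul_le_mul ha1 hQe (abs_nonneg _) zero_le_one
      _ ≤ CQ * S := by rw [one_mul, one_mul]; nlinarith
    · have hfe2 : ⟪e, f⟫ = 0 := by rw [real_inner_comm]; exact hfe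
      have hee : ⟪e, e⟫ = 1 := by rw [real_inner_self_eq_norm_sq, he]; norm_num
      have hwnorm : ∀ t : ℝ, ‖c • e + t • f‖ ^ 2 = c ^ 2 + t ^ 2 := by
        intro t
        rw [norm_add_sq_real, real_inner_smul_left, real_inner_smul_right, hfe2,
          norm_smul, norm_smul, he, hf]
        simp [mul_pow, sq_abs]
      have hwu : ∀ t : ℝ, t ^ 2 = s ^ 2 → ‖c • e + t • f‖ = 1 := by
        intro t ht
        have h1 : ‖c • e + t • f‖ ^ 2 = 1 := by rw [hwnorm t, ht]; exact hcs
        nlinarith [norm_nonneg (c • e + t • f)]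
      have hwin : ∀ t : ℝ, Real.cos θ ≤ ⟪c • e + t • f, e⟫ := by
        intro t
        rw [inner_add_left, real_inner_smul_left, real_inner_smul_left, hee, hfe]
        calc Real.cos θ ≤ c := hcge
        _ = c * 1 + t * 0 := by ring
      have hwp := h (c • e + s • f) (hwu s rfl) (hwin s)
      have hwm := h (c • e + (-s) • f) (hwu (-s) (by ring)) (hwin (-s))
      have hexp : ∀ t : ℝ, B (c • e + t • f) (c • e + t • f) =
          c ^ 2 * B e e + 2 * (c * t) * B e f + t ^ 2 * B f f := by
        intro t
        simp only [map_add, map_smul, ContinuousLinearMap.add_apply,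
          ContinuousLinearMap.coe_smul', Pi.smul_apply, smul_eq_mul]
        rw [hsymm f e]; ring
      rw [hexp s] at hwp
      rw [hexp (-s)] at hwm
      -- bounds on B e f and B f f
      have hBef : |B e f| ≤ S / (c * s) := by
        have hd : (c ^ 2 * B e e + 2 * (c * s) * B e f + s ^ 2 * B f f)
            - (c ^ 2 * B e e + 2 * (c * (-s)) * B e f + (-s) ^ 2 * B f f)
            = 4 * (c * s) * B e f := by ring
        have habs : |4 * (c * s) * B e f| ≤ 2 * S := by
          rw [← hd]
          calc _ ≤ |c ^ 2 * B e e + 2 * (c * s) * B e f + s ^ 2 * B f f| +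
              |c ^ 2 * B e e + 2 * (c * (-s)) * B e f + (-s) ^ 2 * B f f| := abs_sub _ _
          _ ≤ 2 * S := by linarith
        rw [abs_mul, abs_of_pos (by positivity : (0:ℝ) < 4 * (c * s))] at habs
        rw [le_div_iff₀ (by positivity)]
        nlinarith
      have hQf : |B f f| ≤ 2 * S / s ^ 2 + c ^ 2 * S / s ^ 2 := by
        have hd : (c ^ 2 * B e e + 2 * (c * s) * B e f + s ^ 2 * B f f)
            + (c ^ 2 * B e e + 2 * (c * (-s)) * B e f + (-s) ^ 2 * B f f)
            = 2 * c ^ 2 * B e e + 2 * s ^ 2 * B f f := by ring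
        have habs : |2 * s ^ 2 * B f f| ≤ 2 * S + 2 * c ^ 2 * S := by
          have h1 : |2 * c ^ 2 * B e e + 2 * s ^ 2 * B f f| ≤ 2 * S := by
            rw [← hd]
            calc _ ≤ |c ^ 2 * B e e + 2 * (c * s) * B e f + s ^ 2 * B f f| +
                |c ^ 2 * B e e + 2 * (c * (-s)) * B e f + (-s) ^ 2 * B f f| := abs_add_le _ _
            _ ≤ 2 * S := by linarith
          have h2 : |2 * c ^ 2 * B e e| ≤ 2 * c ^ 2 * S := by
            rw [abs_mul, abs_of_nonneg (by positivity : (0:ℝ) ≤ 2 * c ^ 2)]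
            exact mul_le_mul_of_nonneg_left hQe (by positivity)
          calc |2 * s ^ 2 * B f f| = |(2 * c ^ 2 * B e e + 2 * s ^ 2 * B f f)
              - 2 * c ^ 2 * B e e| := by ring_nf
          _ ≤ |2 * c ^ 2 * B e e + 2 * s ^ 2 * B f f| + |2 * c ^ 2 * B e e| := abs_sub _ _
          _ ≤ 2 * S + 2 * c ^ 2 * S := by linarith
        rw [abs_mul, abs_of_pos (by positivity : (0:ℝ) < 2 * s ^ 2)] at habs
        rw [← add_div, le_div_iff₀ (by positivity)]
        nlinarith
      -- assemble
      have hexp2 : B (a • e + b • f) (a • e + b • f) =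
          a ^ 2 * B e e + 2 * (a * b) * B e f + b ^ 2 * B f f := by
        simp only [map_add, map_smul, ContinuousLinearMap.add_apply,
          ContinuousLinearMap.coe_smul', Pi.smul_apply, smul_eq_mul]
        rw [hsymm f e]; ring
      rw [hexp2]
      have e1 : |a ^ 2 * B e e| ≤ S := by
        rw [abs_mul, abs_pow]
        have h1 : |a| ^ 2 ≤ 1 := by nlinarith [abs_nonneg a]
        calc |a| ^ 2 * |B e e| ≤ 1 * S := mul_le_mul h1 hQe (abs_nonneg _) zero_le_one
        _ = S := one_mul S
      have e2 : |2 * (a * b) * B e f| ≤ 2 * (S / (c * s)) := by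
        rw [abs_mul]
        have hab : |2 * (a * b)| ≤ 2 := by
          rw [abs_mul, abs_mul, abs_two]
          nlinarith [abs_nonneg a, abs_nonneg b]
        exact mul_le_mul hab hBef (abs_nonneg _) (by norm_num)
      have e3 : |b ^ 2 * B f f| ≤ 2 * S / s ^ 2 + c ^ 2 * S / s ^ 2 := by
        rw [abs_mul, abs_pow]
        have h1 : |b| ^ 2 ≤ 1 := by nlinarith [abs_nonneg b]
        have h2 : 0 ≤ 2 * S / s ^ 2 + c ^ 2 * S / s ^ 2 := by positivity
        calc |b| ^ 2 * |B f f| ≤ 1 * (2 * S / s ^ 2 + c ^ 2 * S / s ^ 2) :=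
              mul_le_mul h1 hQf (abs_nonneg _) zero_le_one
        _ = _ := one_mul _
      have htot : |a ^ 2 * B e e + 2 * (a * b) * B e f + b ^ 2 * B f f| ≤
          S + 2 * (S / (c * s)) + (2 * S / s ^ 2 + c ^ 2 * S / s ^ 2) := by
        calc _ ≤ |a ^ 2 * B e e + 2 * (a * b) * B e f| + |b ^ 2 * B f f| := abs_add_le _ _
        _ ≤ |a ^ 2 * B e e| + |2 * (a * b) * B e f| + |b ^ 2 * B f f| := by
            have := abs_add_le (a ^ 2 * B e e) (2 * (a * b) * B e f); linarith
        _ ≤ _ := by linarith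
      refine le_trans htot ?_
      have hc2S : c ^ 2 * S / s ^ 2 ≤ S / s ^ 2 := by
        apply div_le_div_of_nonneg_right _ (by positivity)
        nlinarith
      have expand : CQ * S = S + 2 * (S / (c * s)) + 3 * S / s ^ 2 := by
        rw [hCQ]; field_simp
      rw [expand]
      have : 2 * S / s ^ 2 + S / s ^ 2 = 3 * S / s ^ 2 := by ring
      linarith
  -- from unit quadratic bound to full bilinear bound
  have hQall := quad_of_unit B (by positivity : (0:ℝ) ≤ CQ * S) hQunit
  refine bilin_of_unit B (by positivity) (fun v w hv hw => ?_)
  have hpol : B v w = (B (v + w) (v + w) - B (v - w) (v - w)) / 4 := by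
    simp only [map_add, map_sub, ContinuousLinearMap.add_apply, ContinuousLinearMap.sub_apply]
    rw [hsymm w v]; ring
  have hpar : ‖v + w‖ ^ 2 + ‖v - w‖ ^ 2 = 4 := by
    rw [norm_add_sq_real, norm_sub_sq_real, hv, hw]; ring
  have h1 := hQall (v + w)
  have h2 := hQall (v - w)
  rw [hpol]
  rw [abs_div, abs_of_pos (by norm_num : (0:ℝ) < 4), div_le_iff₀ (by norm_num : (0:ℝ) < 4)]
  have hCQS : 0 ≤ CQ * S := by positivity
  calc |B (v + w) (v + w) - B (v - w) (v - w)| ≤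
      |B (v + w) (v + w)| + |B (v - w) (v - w)| := abs_sub _ _
  _ ≤ CQ * S * ‖v + w‖ ^ 2 + CQ * S * ‖v - w‖ ^ 2 := by linarith
  _ = CQ * S * 4 := by rw [← mul_add, hpar]

set_option maxHeartbeats 1000000 in
lemma directional_estimate {Ω : Set E} {u : E → ℝ} {M Hc α L : ℝ}
    (hα0 : 0 < α) (hH0 : 0 ≤ Hc) (hM0 : 0 ≤ M) (hL : 0 < L)
    (hdiff : ∀ x ∈ Ω, DifferentiableAt ℝ u x)
    (hdiff2 : ∀ x ∈ Ω, DifferentiableAt ℝ (fderiv ℝ u) x)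
    (hM : ∀ x ∈ Ω, |u x| ≤ M)
    (hH : ∀ x ∈ Ω, ∀ y ∈ Ω,
      ‖fderiv ℝ (fderiv ℝ u) x - fderiv ℝ (fderiv ℝ u) y‖ ≤ Hc * ‖x - y‖ ^ α)
    {x : E} (hx : x ∈ Ω) {w : E} (hw : ‖w‖ = 1)
    (hseg : ∀ t : ℝ, 0 < t → t ≤ L → x + t • w ∈ Ω) :
    |fderiv ℝ u x w| ≤ 5 * Hc * L ^ (1 + α) + 10 * M / L ∧
    |fderiv ℝ (fderiv ℝ u) x w w| ≤ 12 * Hc * L ^ α + 24 * M / L ^ 2 := by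
  classical
  set γ : ℝ → E := fun t => x + t • w with hγdef
  have hmem : ∀ t ∈ Icc (0:ℝ) L, γ t ∈ Ω := by
    intro t ht
    rcases eq_or_lt_of_le ht.1 with h0 | h0
    · simpa [hγdef, ← h0] using hx
    · exact hseg t h0 ht.2
  have hγd : ∀ t : ℝ, HasDerivAt γ w t := by
    intro t
    simpa only [id_eq, one_smul] using ((hasDerivAt_id t).smul_const w).const_add x
  have hdist : ∀ t s : ℝ, ‖γ t - γ s‖ = |t - s| := by
    intro t s
    have : γ t - γ s = (t - s) • w := by
      simp only [hγdef]; rw [sub_smul]; abel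
    rw [this, norm_smul, hw, mul_one, Real.norm_eq_abs]
  set ψ : ℝ → ℝ := fun t => u (γ t) with hψdef
  set p : ℝ → ℝ := fun t => fderiv ℝ u (γ t) w with hpdef
  set q : ℝ → ℝ := fun t => fderiv ℝ (fderiv ℝ u) (γ t) w w with hqdef
  have hψd : ∀ t ∈ Icc (0:ℝ) L, HasDerivAt ψ (p t) t := by
    intro t ht
    exact ((hdiff _ (hmem t ht)).hasFDerivAt).comp_hasDerivAt t (hγd t)
  have hpd : ∀ t ∈ Icc (0:ℝ) L, HasDerivAt p (q t) t := by
    intro t ht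
    have h1 : HasDerivAt (fun s => fderiv ℝ u (γ s)) (fderiv ℝ (fderiv ℝ u) (γ t) w) t :=
      ((hdiff2 _ (hmem t ht)).hasFDerivAt).comp_hasDerivAt t (hγd t)
    have h2 := h1.clm_apply (hasDerivAt_const t w)
    simpa using h2
  -- Hölder bound on q
  have hq : ∀ t ∈ Icc (0:ℝ) L, |q t - q 0| ≤ Hc * t ^ α := by
    intro t ht
    have hΦ : |q t - q 0| ≤ ‖fderiv ℝ (fderiv ℝ u) (γ t) - fderiv ℝ (fderiv ℝ u) (γ 0)‖ := by
      have heq : q t - q 0 = (fderiv ℝ (fderiv ℝ u) (γ t) - fderiv ℝ (fderiv ℝ u) (γ 0)) w w := by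
        simp [hqdef]
      rw [heq, ← Real.norm_eq_abs]
      calc ‖(fderiv ℝ (fderiv ℝ u) (γ t) - fderiv ℝ (fderiv ℝ u) (γ 0)) w w‖
          ≤ ‖(fderiv ℝ (fderiv ℝ u) (γ t) - fderiv ℝ (fderiv ℝ u) (γ 0)) w‖ * ‖w‖ :=
            ContinuousLinearMap.le_opNorm _ w
      _ ≤ (‖fderiv ℝ (fderiv ℝ u) (γ t) - fderiv ℝ (fderiv ℝ u) (γ 0)‖ * ‖w‖) * ‖w‖ := by
            apply mul_le_mul_of_nonneg_right _ (norm_nonneg w)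
            exact ContinuousLinearMap.le_opNorm _ w
      _ = ‖fderiv ℝ (fderiv ℝ u) (γ t) - fderiv ℝ (fderiv ℝ u) (γ 0)‖ := by rw [hw]; ring
    refine hΦ.trans ?_
    have := hH (γ t) (hmem t ht) (γ 0) (hmem 0 ⟨le_refl 0, le_of_lt hL⟩)
    rw [hdist t 0] at this
    simpa [abs_of_nonneg ht.1] using this
  -- first primitive bound: |p t - p 0 - t * q 0| ≤ Hc * t ^ (1+α)
  set g1 : ℝ → ℝ := fun t => p t - p 0 - q 0 * t with hg1def
  have hg1 : ∀ t ∈ Icc (0:ℝ) L, |g1 t| ≤ Hc * t ^ (1 + α) := by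
    intro t ht
    rcases eq_or_lt_of_le ht.1 with h0 | h0
    · have : (0:ℝ) ^ (1 + α) = 0 := Real.zero_rpow (by positivity)
      simp [hg1def, ← h0, this]
    have hd : ∀ s ∈ Icc (0:ℝ) t, HasDerivWithinAt g1 (q s - q 0) (Icc 0 t) s := by
      intro s hs
      have hs' : s ∈ Icc (0:ℝ) L := ⟨hs.1, hs.2.trans ht.2⟩
      have hlin : HasDerivAt (fun r : ℝ => q 0 * r) (q 0) s := by
        simpa using (hasDerivAt_id s).const_mul (q 0)
      have : HasDerivAt g1 (q s - q 0) s := by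
        exact ((hpd s hs').sub_const (p 0)).sub hlin
      exact this.hasDerivWithinAt
    have hbound : ∀ s ∈ Ico (0:ℝ) t, ‖q s - q 0‖ ≤ Hc * t ^ α := by
      intro s hs
      have hs' : s ∈ Icc (0:ℝ) L := ⟨hs.1, (le_of_lt hs.2).trans ht.2⟩
      rw [Real.norm_eq_abs]
      refine (hq s hs').trans ?_
      exact mul_le_mul_of_nonneg_left (Real.rpow_le_rpow hs.1 (le_of_lt hs.2) (le_of_lt hα0)) hH0
    have := norm_image_sub_le_of_norm_deriv_le_segment' hd hbound t (right_mem_Icc.mpr (le_of_lt h0))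
    have hg10 : g1 0 = 0 := by simp [hg1def]
    rw [hg10, sub_zero, sub_zero, Real.norm_eq_abs] at this
    refine this.trans ?_
    rw [Real.rpow_add h0, Real.rpow_one]
    ring_nf
    exact le_refl _
  set g : ℝ → ℝ := fun t => ψ t - ψ 0 - p 0 * t - q 0 * (t ^ 2 / 2) with hgdef
  have hg : ∀ t ∈ Icc (0:ℝ) L, |g t| ≤ Hc * t ^ (2 + α) := by
    intro t ht
    rcases eq_or_lt_of_le ht.1 with h0 | h0
    · have : (0:ℝ) ^ (2 + α) = 0 := Real.zero_rpow (by positivity)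
      simp [hgdef, ← h0, this]
    have hd : ∀ s ∈ Icc (0:ℝ) t, HasDerivWithinAt g (g1 s) (Icc 0 t) s := by
      intro s hs
      have hs' : s ∈ Icc (0:ℝ) L := ⟨hs.1, hs.2.trans ht.2⟩
      have hlin : HasDerivAt (fun r : ℝ => p 0 * r) (p 0) s := by
        simpa using (hasDerivAt_id s).const_mul (p 0)
      have hquad : HasDerivAt (fun r : ℝ => q 0 * (r ^ 2 / 2)) (q 0 * s) s := by
        have h1 : HasDerivAt (fun r : ℝ => r ^ 2 / 2) s s := by
          have := (hasDerivAt_pow 2 s).div_const 2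
          simpa using this
        simpa using h1.const_mul (q 0)
      have : HasDerivAt g (g1 s) s := by
        have := (((hψd s hs').sub_const (ψ 0)).sub hlin).sub hquad
        exact this
      exact this.hasDerivWithinAt
    have hbound : ∀ s ∈ Ico (0:ℝ) t, ‖g1 s‖ ≤ Hc * t ^ (1 + α) := by
      intro s hs
      have hs' : s ∈ Icc (0:ℝ) L := ⟨hs.1, (le_of_lt hs.2).trans ht.2⟩
      rw [Real.norm_eq_abs]
      refine (hg1 s hs').trans ?_
      exact mul_le_mul_of_nonneg_left
        (Real.rpow_le_rpow hs.1 (le_of_lt hs.2) (by positivity)) hH0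
    have := norm_image_sub_le_of_norm_deriv_le_segment' hd hbound t (right_mem_Icc.mpr (le_of_lt h0))
    have hg0 : g 0 = 0 := by simp [hgdef]
    rw [hg0, sub_zero, sub_zero, Real.norm_eq_abs] at this
    refine this.trans ?_
    have he : (2:ℝ) + α = (1 + α) + 1 := by ring
    have h2a : Hc * t ^ (1 + α) * t = Hc * t ^ (2 + α) := by
      rw [he, Real.rpow_add h0 (1+α) 1, Real.rpow_one]; ring
    exact le_of_eq h2a
  -- apply at L and L/2
  have hbL := hg L ⟨le_of_lt hL, le_refl L⟩
  have hbL2 := hg (L / 2) ⟨by linarith, by linarith⟩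
  have hL2pow : Hc * (L / 2) ^ (2 + α) ≤ Hc * L ^ (2 + α) := by
    apply mul_le_mul_of_nonneg_left _ hH0
    exact Real.rpow_le_rpow (by linarith) (by linarith) (by positivity)
  have hbL2' : |g (L / 2)| ≤ Hc * L ^ (2 + α) := hbL2.trans hL2pow
  have hMψ : ∀ t ∈ Icc (0:ℝ) L, |ψ t| ≤ M := fun t ht => hM _ (hmem t ht)
  have hM0' := hMψ 0 ⟨le_refl 0, le_of_lt hL⟩
  have hML := hMψ L ⟨le_of_lt hL, le_refl L⟩
  have hML2 := hMψ (L / 2) ⟨by linarith, by linarith⟩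
  have habs : ∀ r : ℝ, |r| ≤ Hc * L ^ (2 + α) → -(Hc * L ^ (2 + α)) ≤ r ∧ r ≤ Hc * L ^ (2 + α) :=
    fun r hr => abs_le.mp hr
  obtain ⟨hA1, hA2⟩ := habs _ hbL
  obtain ⟨hB1, hB2⟩ := habs _ hbL2'
  obtain ⟨hψ01, hψ02⟩ := abs_le.mp hM0'
  obtain ⟨hψL1, hψL2⟩ := abs_le.mp hML
  obtain ⟨hψ21, hψ22⟩ := abs_le.mp hML2
  have hgL : g L = ψ L - ψ 0 - p 0 * L - q 0 * (L ^ 2 / 2) := by simp [hgdef]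
  have hgL2 : g (L / 2) = ψ (L/2) - ψ 0 - p 0 * (L/2) - q 0 * ((L/2) ^ 2 / 2) := by simp [hgdef]
  rw [hgL] at hA1 hA2
  rw [hgL2] at hB1 hB2
  -- solve for p 0 and q 0
  have hpx : p 0 = fderiv ℝ u x w := by simp [hpdef, hγdef]
  have hqx : q 0 = fderiv ℝ (fderiv ℝ u) x w w := by simp [hqdef, hγdef]
  clear_value γ ψ p q g1 g
  have hp0 : |p 0 * L| ≤ 8 * M + 5 * (Hc * L ^ (2 + α)) := by
    have key : p 0 * L = 4 * ψ (L/2) - 3 * ψ 0 - ψ L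
        - 4 * (ψ (L/2) - ψ 0 - p 0 * (L/2) - q 0 * ((L/2) ^ 2 / 2))
        + (ψ L - ψ 0 - p 0 * L - q 0 * (L ^ 2 / 2)) := by ring
    rw [abs_le]; constructor <;> nlinarith
  have hq0 : |q 0 * (L ^ 2 / 4)| ≤ 4 * M + 3 * (Hc * L ^ (2 + α)) := by
    have key : q 0 * (L ^ 2 / 4) = ψ L + ψ 0 - 2 * ψ (L/2)
        - (ψ L - ψ 0 - p 0 * L - q 0 * (L ^ 2 / 2))
        + 2 * (ψ (L/2) - ψ 0 - p 0 * (L/2) - q 0 * ((L/2) ^ 2 / 2)) := by ring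
    rw [abs_le]; constructor <;> nlinarith
  have hLpow1 : L ^ (2 + α) = L ^ (1 + α) * L := by
    have h2 : (2:ℝ) + α = (1 + α) + 1 := by ring
    rw [h2, Real.rpow_add hL, Real.rpow_one]
  have hLpow2 : L ^ (2 + α) = L ^ α * L ^ 2 := by
    have h2 : (2:ℝ) + α = α + 2 := by ring
    rw [h2, Real.rpow_add hL]
    norm_num [Real.rpow_natCast]
  constructor
  · rw [← hpx]
    have h1 : |p 0| * L ≤ 8 * M + 5 * (Hc * L ^ (2 + α)) := by
      have he2 : |p 0| * L = |p 0 * L| := by rw [abs_mul, abs_of_pos hL]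
      rw [he2]; exact hp0
    have h2 : |p 0| ≤ (8 * M + 5 * (Hc * L ^ (2 + α))) / L := (le_div_iff₀ hL).mpr h1
    have heq : (8 * M + 5 * (Hc * L ^ (2 + α))) / L = 8 * M / L + 5 * Hc * L ^ (1 + α) := by
      rw [hLpow1]; field_simp
    have hMM : 8 * M / L ≤ 10 * M / L :=
      (div_le_div_iff_of_pos_right hL).mpr (by linarith)
    rw [heq] at h2
    linarith
  · rw [← hqx]
    have hpos : (0:ℝ) < L ^ 2 / 4 := by positivity
    have h1 : |q 0| * (L ^ 2 / 4) ≤ 4 * M + 3 * (Hc * L ^ (2 + α)) := by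
      have he2 : |q 0| * (L ^ 2 / 4) = |q 0 * (L ^ 2 / 4)| := by rw [abs_mul, abs_of_pos hpos]
      rw [he2]; exact hq0
    have h2 : |q 0| ≤ (4 * M + 3 * (Hc * L ^ (2 + α))) / (L ^ 2 / 4) := (le_div_iff₀ hpos).mpr h1
    have heq : (4 * M + 3 * (Hc * L ^ (2 + α))) / (L ^ 2 / 4) =
        16 * M / L ^ 2 + 12 * Hc * L ^ α := by
      rw [hLpow2]; field_simp; ring
    have hMM : 16 * M / L ^ 2 ≤ 24 * M / L ^ 2 :=
      (div_le_div_iff_of_pos_right (by positivity)).mpr (by linarith)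
    rw [heq] at h2
    linarith

set_option maxHeartbeats 2000000 in
/-- Interpolation inequalities on bounded open sets satisfying the interior cone
condition with opening angle `θ` and height `h`: there are constants `c₇, c₈ > 0`
depending only on `d`, `θ` and `α` such that for every such domain `Ω`, every `u`
bounded by `M` on `Ω` whose second derivative is `α`-Hölder with constant `H` on `Ω`,
and every `ε ∈ (0, h]`, one has `‖Du‖ ≤ ε^{1+α} H + (c₇/ε) M` and
`‖D²u‖ ≤ ε^α H + (c₈/ε²) M` on `Ω`. -/
theorem interpolation_inequalities_cone_condition
    (d : ℕ) (hd : 1 ≤ d) (θ : ℝ) (hθ0 : 0 < θ) (hθ1 : θ ≤ Real.pi / 2)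
    (α : ℝ) (hα : α ∈ Set.Ioo (0:ℝ) 1) :
    ∃ c₇ : ℝ, 0 < c₇ ∧ ∃ c₈ : ℝ, 0 < c₈ ∧
      ∀ (Ω : Set (EuclideanSpace ℝ (Fin d))) (h : ℝ), 0 < h →
        IsOpen Ω → Bornology.IsBounded Ω →
        (∀ x ∈ Ω, ∃ e : EuclideanSpace ℝ (Fin d), ‖e‖ = 1 ∧
          ∀ y : EuclideanSpace ℝ (Fin d), 0 < ‖y‖ → ‖y‖ ≤ h →
            ‖y‖ * Real.cos θ ≤ ⟪y, e⟫ → x + y ∈ Ω) →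
        ∀ (u : EuclideanSpace ℝ (Fin d) → ℝ) (M H : ℝ),
          (∀ x ∈ Ω, DifferentiableAt ℝ u x) →
          (∀ x ∈ Ω, DifferentiableAt ℝ (fderiv ℝ u) x) →
          (∀ x ∈ Ω, |u x| ≤ M) →
          (∀ x ∈ Ω, ∀ y ∈ Ω,
            ‖fderiv ℝ (fderiv ℝ u) x - fderiv ℝ (fderiv ℝ u) y‖ ≤ H * ‖x - y‖ ^ α) →
          ∀ ε : ℝ, 0 < ε → ε ≤ h →
            (∀ x ∈ Ω, ‖fderiv ℝ u x‖ ≤ ε ^ (1 + α) * H + (c₇ / ε) * M) ∧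
            (∀ x ∈ Ω, ‖fderiv ℝ (fderiv ℝ u) x‖ ≤ ε ^ α * H + (c₈ / ε ^ 2) * M) := by
  obtain ⟨hα0, hα1⟩ := hα
  have hθpi : θ ≤ Real.pi := le_trans hθ1 (by linarith [Real.pi_pos])
  have hspos : 0 < Real.sin (θ / 2) :=
    Real.sin_pos_of_pos_of_lt_pi (by linarith) (by linarith [Real.pi_pos])
  have hcpos : 0 < Real.cos (θ / 2) :=
    Real.cos_pos_of_mem_Ioo ⟨by linarith [Real.pi_pos], by linarith⟩
  obtain ⟨C₀, hC₀def⟩ : ∃ C₀ : ℝ, C₀ = 1 + 1 / Real.sin (θ / 2) := ⟨_, rfl⟩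
  obtain ⟨C₁, hC₁def⟩ : ∃ C₁ : ℝ,
      C₁ = 1 + 2 / (Real.cos (θ / 2) * Real.sin (θ / 2)) + 3 / Real.sin (θ / 2) ^ 2 := ⟨_, rfl⟩
  have hC₀ : 0 < C₀ := by rw [hC₀def]; positivity
  have hC₁ : 0 < C₁ := by rw [hC₁def]; positivity
  obtain ⟨K₇, hK₇def⟩ : ∃ K : ℝ, K = max 1 (5 * C₀) := ⟨_, rfl⟩
  obtain ⟨K₈, hK₈def⟩ : ∃ K : ℝ, K = (max 1 (12 * C₁)) ^ (α⁻¹ : ℝ) := ⟨_, rfl⟩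
  have hK₇1 : (1:ℝ) ≤ K₇ := by rw [hK₇def]; exact le_max_left _ _
  have hK₇0 : (0:ℝ) < K₇ := lt_of_lt_of_le one_pos hK₇1
  have hK₇ge : 5 * C₀ ≤ K₇ := by rw [hK₇def]; exact le_max_right _ _
  have hK₈1 : (1:ℝ) ≤ K₈ := by
    rw [hK₈def]; exact Real.one_le_rpow (le_max_left _ _) (by positivity)
  have hK₈0 : (0:ℝ) < K₈ := lt_of_lt_of_le one_pos hK₈1
  have hK₈α : K₈ ^ (α : ℝ) = max 1 (12 * C₁) := by
    rw [hK₈def, ← Real.rpow_mul (le_trans zero_le_one (le_max_left _ _)),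
      inv_mul_cancel₀ (ne_of_gt hα0), Real.rpow_one]
  refine ⟨10 * C₀ * K₇, by positivity, 24 * C₁ * K₈ ^ 2, by positivity, ?_⟩
  intro Ω h hh hopen _hbdd hcone u M Hc hdiff hdiff2 hMb hHb ε hε0 hεh
  -- nonnegativity of M and Hc (using a point of Ω when available)
  have hnonneg : ∀ x ∈ Ω, 0 ≤ M ∧ 0 ≤ Hc := by
    intro x hx
    obtain ⟨e, he1, hec⟩ := hcone x hx
    have hne : ‖(h • e : EuclideanSpace ℝ (Fin d))‖ = h := by
      rw [norm_smul, he1, Real.norm_eq_abs, abs_of_pos hh, mul_one]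
    have hy : x + h • e ∈ Ω := by
      refine hec (h • e) (by rw [hne]; exact hh) (le_of_eq hne) ?_
      rw [hne, real_inner_smul_left, real_inner_self_eq_norm_sq, he1]
      have : Real.cos θ ≤ 1 := Real.cos_le_one θ
      nlinarith
    refine ⟨le_trans (abs_nonneg _) (hMb x hx), ?_⟩
    have hd1 := hHb x hx _ hy
    have hd2 : ‖x - (x + h • e)‖ = h := by
      have : x - (x + h • e) = -(h • e) := by abel
      rw [this, norm_neg, hne]
    rw [hd2] at hd1
    have h3 : (0:ℝ) < h ^ (α:ℝ) := Real.rpow_pos_of_pos hh α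
    nlinarith [norm_nonneg (fderiv ℝ (fderiv ℝ u) x - fderiv ℝ (fderiv ℝ u) (x + h • e))]
  -- segment membership helper
  have hsegment : ∀ x ∈ Ω, ∀ (e : EuclideanSpace ℝ (Fin d)), ‖e‖ = 1 →
      (∀ y : EuclideanSpace ℝ (Fin d), 0 < ‖y‖ → ‖y‖ ≤ h →
        ‖y‖ * Real.cos θ ≤ ⟪y, e⟫ → x + y ∈ Ω) →
      ∀ (L : ℝ), 0 < L → L ≤ h →
      ∀ w : EuclideanSpace ℝ (Fin d), ‖w‖ = 1 → Real.cos θ ≤ ⟪w, e⟫ →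
      ∀ t : ℝ, 0 < t → t ≤ L → x + t • w ∈ Ω := by
    intro x hx e he1 hec L hL0 hLh w hw hwe t ht0 htL
    have hnt : ‖(t • w : EuclideanSpace ℝ (Fin d))‖ = t := by
      rw [norm_smul, hw, Real.norm_eq_abs, abs_of_pos ht0, mul_one]
    refine hec (t • w) (by rw [hnt]; exact ht0) (by rw [hnt]; linarith) ?_
    rw [hnt, real_inner_smul_left]
    exact mul_le_mul_of_nonneg_left hwe (le_of_lt ht0)
  constructor
  · -- gradient bound
    intro x hx
    obtain ⟨hM0, hH0⟩ := hnonneg x hx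
    obtain ⟨e, he1, hec⟩ := hcone x hx
    obtain ⟨L, hLdef⟩ : ∃ L : ℝ, L = ε / K₇ := ⟨_, rfl⟩
    have hL0 : 0 < L := by rw [hLdef]; positivity
    have hLh : L ≤ h := le_trans (by rw [hLdef]; exact div_le_self (le_of_lt hε0) hK₇1) hεh
    have hS1 : (0:ℝ) ≤ 5 * Hc * L ^ (1 + α) + 10 * M / L := by
      have h1 : (0:ℝ) ≤ 5 * Hc * L ^ (1 + α) :=
        mul_nonneg (by linarith) (Real.rpow_nonneg (le_of_lt hL0) _)
      have h2 : (0:ℝ) ≤ 10 * M / L := div_nonneg (by linarith) (le_of_lt hL0)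
      linarith
    have hdir : ∀ w : EuclideanSpace ℝ (Fin d), ‖w‖ = 1 → Real.cos θ ≤ ⟪w, e⟫ →
        |fderiv ℝ u x w| ≤ 5 * Hc * L ^ (1 + α) + 10 * M / L := by
      intro w hw hwe
      exact (directional_estimate hα0 hH0 hM0 hL0 hdiff hdiff2 hMb hHb hx hw
        (hsegment x hx e he1 hec L hL0 hLh w hw hwe)).1
    have hT := cone_lin (fderiv ℝ u x) he1 hθ0 hθ1 hS1 hdir
    rw [← hC₀def] at hT
    refine hT.trans ?_
    -- arithmetic
    have hKp : (0:ℝ) < K₇ ^ ((1:ℝ) + α) := Real.rpow_pos_of_pos hK₇0 _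
    have hKge : 5 * C₀ ≤ K₇ ^ ((1:ℝ) + α) := by
      refine le_trans hK₇ge ?_
      calc K₇ = K₇ ^ (1:ℝ) := (Real.rpow_one K₇).symm
      _ ≤ K₇ ^ ((1:ℝ) + α) := Real.rpow_le_rpow_of_exponent_le hK₇1 (by linarith)
    have hLpow : L ^ ((1:ℝ) + α) = ε ^ ((1:ℝ) + α) / K₇ ^ ((1:ℝ) + α) := by
      rw [hLdef]; exact Real.div_rpow (le_of_lt hε0) (le_of_lt hK₇0) _
    have hA0 : (0:ℝ) ≤ ε ^ ((1:ℝ) + α) := Real.rpow_nonneg (le_of_lt hε0) _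
    have t1 : C₀ * (5 * Hc * L ^ ((1:ℝ) + α)) ≤ ε ^ ((1:ℝ) + α) * Hc := by
      rw [hLpow]
      rw [show C₀ * (5 * Hc * (ε ^ ((1:ℝ) + α) / K₇ ^ ((1:ℝ) + α))) =
        5 * C₀ * Hc * ε ^ ((1:ℝ) + α) / K₇ ^ ((1:ℝ) + α) by ring]
      rw [div_le_iff₀ hKp]
      nlinarith [mul_nonneg (mul_nonneg hH0 hA0) (sub_nonneg.mpr hKge)]
    have t2 : C₀ * (10 * M / L) = (10 * C₀ * K₇ / ε) * M := by
      rw [hLdef]; field_simp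
    calc C₀ * (5 * Hc * L ^ ((1:ℝ) + α) + 10 * M / L)
        = C₀ * (5 * Hc * L ^ ((1:ℝ) + α)) + C₀ * (10 * M / L) := by ring
    _ ≤ ε ^ ((1:ℝ) + α) * Hc + (10 * C₀ * K₇ / ε) * M := by rw [t2]; linarith
  · -- second derivative bound
    intro x hx
    obtain ⟨hM0, hH0⟩ := hnonneg x hx
    obtain ⟨e, he1, hec⟩ := hcone x hx
    obtain ⟨L, hLdef⟩ : ∃ L : ℝ, L = ε / K₈ := ⟨_, rfl⟩
    have hL0 : 0 < L := by rw [hLdef]; positivity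
    have hLh : L ≤ h := le_trans (by rw [hLdef]; exact div_le_self (le_of_lt hε0) hK₈1) hεh
    have hS2 : (0:ℝ) ≤ 12 * Hc * L ^ α + 24 * M / L ^ 2 := by
      have h1 : (0:ℝ) ≤ 12 * Hc * L ^ α :=
        mul_nonneg (by linarith) (Real.rpow_nonneg (le_of_lt hL0) _)
      have h2 : (0:ℝ) ≤ 24 * M / L ^ 2 := div_nonneg (by linarith) (by positivity)
      linarith
    have hsymm : ∀ v w : EuclideanSpace ℝ (Fin d),
        fderiv ℝ (fderiv ℝ u) x v w = fderiv ℝ (fderiv ℝ u) x w v := by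
      intro v w
      have hev : ∀ᶠ y in nhds x, HasFDerivAt u (fderiv ℝ u y) y := by
        filter_upwards [hopen.mem_nhds hx] with y hy using (hdiff y hy).hasFDerivAt
      exact second_derivative_symmetric_of_eventually hev (hdiff2 x hx).hasFDerivAt v w
    have hdir : ∀ w : EuclideanSpace ℝ (Fin d), ‖w‖ = 1 → Real.cos θ ≤ ⟪w, e⟫ →
        |fderiv ℝ (fderiv ℝ u) x w w| ≤ 12 * Hc * L ^ α + 24 * M / L ^ 2 := by
      intro w hw hwe
      exact (directional_estimate hα0 hH0 hM0 hL0 hdiff hdiff2 hMb hHb hx hw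
        (hsegment x hx e he1 hec L hL0 hLh w hw hwe)).2
    have hB := cone_bilin (fderiv ℝ (fderiv ℝ u) x) hsymm he1 hθ0 hθ1 hS2 hdir
    rw [← hC₁def] at hB
    refine hB.trans ?_
    have hKp : (0:ℝ) < K₈ ^ (α:ℝ) := Real.rpow_pos_of_pos hK₈0 _
    have hKge : 12 * C₁ ≤ K₈ ^ (α:ℝ) := by
      rw [hK₈α]; exact le_max_right _ _
    have hLpow : L ^ (α:ℝ) = ε ^ (α:ℝ) / K₈ ^ (α:ℝ) := by
      rw [hLdef]; exact Real.div_rpow (le_of_lt hε0) (le_of_lt hK₈0) _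
    have hA0 : (0:ℝ) ≤ ε ^ (α:ℝ) := Real.rpow_nonneg (le_of_lt hε0) _
    have t1 : C₁ * (12 * Hc * L ^ (α:ℝ)) ≤ ε ^ (α:ℝ) * Hc := by
      rw [hLpow]
      rw [show C₁ * (12 * Hc * (ε ^ (α:ℝ) / K₈ ^ (α:ℝ))) =
        12 * C₁ * Hc * ε ^ (α:ℝ) / K₈ ^ (α:ℝ) by ring]
      rw [div_le_iff₀ hKp]
      nlinarith [mul_nonneg (mul_nonneg hH0 hA0) (sub_nonneg.mpr hKge)]
    have t2 : C₁ * (24 * M / L ^ 2) = (24 * C₁ * K₈ ^ 2 / ε ^ 2) * M := by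
      rw [hLdef]; field_simp
    calc C₁ * (12 * Hc * L ^ (α:ℝ) + 24 * M / L ^ 2)
        = C₁ * (12 * Hc * L ^ (α:ℝ)) + C₁ * (24 * M / L ^ 2) := by ring
    _ ≤ ε ^ (α:ℝ) * Hc + (24 * C₁ * K₈ ^ 2 / ε ^ 2) * M := by rw [t2]; linarith
end

section
/- Let d ≥ 1 and let Ω ⊆ ℝ^d be a nonempty bounded connected open set whose topological boundary ∂Ω is the union of two disjoint nonempty sets Γ and Σ. Let v : ℝ^d → ℝ be continuous on the closure of Ω and harmonic on Ω, with v(x) = 0 for every x ∈ Γ. Let ν : Σ → ℝ^d be such that for every x ∈ Σ there exists δ > 0 with x − t·ν(x) ∈ Ω for all t ∈ (0, δ), and assume that for every x ∈ Σ the one-sided limit ∂v/∂ν(x) := lim_{t→0⁺} (v(x) − v(x − t·ν(x)))/t exists and is strictly positive. Then v(x) > 0 for every x ∈ Ω. -/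
open Filter Set

/-- 1D: second derivative at a local min is nonnegative. -/
lemma second_deriv_nonneg (g g' : ℝ → ℝ) (c : ℝ) (hmin : IsLocalMin g 0)
    (hg : ∀ᶠ t in nhds (0:ℝ), HasDerivAt g (g' t) t)
    (hg' : HasDerivAt g' c 0) : 0 ≤ c := by
  by_contra hc
  push_neg at hc
  have hg0 : g' 0 = 0 := by
    have h := (hg.self_of_nhds).deriv
    have h2 := hmin.deriv_eq_zero
    rw [h] at h2; exact h2
  have hslope : Tendsto (slope g' 0) (nhdsWithin 0 (Set.Ioi 0)) (nhds c) :=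
    (hasDerivWithinAt_iff_tendsto_slope.mp (hg'.hasDerivWithinAt (s := Set.Ioi 0))).mono_left
      (nhdsWithin_mono _ (by intro t ht; exact ⟨ht, ne_of_gt ht⟩))
  have h1 : ∀ᶠ t in nhdsWithin (0:ℝ) (Set.Ioi 0), g' t < 0 := by
    filter_upwards [hslope.eventually (gt_mem_nhds hc), self_mem_nhdsWithin] with t hst ht
    have hsl : slope g' 0 t = g' t / t := by simp [slope_def_field, hg0]
    rw [hsl] at hst
    have he : g' t = (g' t / t) * t := (div_mul_cancel₀ _ (ne_of_gt ht)).symm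
    rw [he]; exact mul_neg_of_neg_of_pos hst ht
  -- extract δ's
  obtain ⟨δ₁, hδ₁, hP₁⟩ : ∃ δ > 0, ∀ t, |t| < δ → t > 0 → g' t < 0 := by
    rw [eventually_nhdsWithin_iff, Metric.eventually_nhds_iff] at h1
    obtain ⟨ε, hε, h⟩ := h1
    exact ⟨ε, hε, fun t ht htpos => h (by simpa [Real.dist_eq] using ht) htpos⟩
  obtain ⟨δ₂, hδ₂, hP₂⟩ : ∃ δ > 0, ∀ t, |t| < δ → HasDerivAt g (g' t) t := by
    rw [Metric.eventually_nhds_iff] at hg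
    obtain ⟨ε, hε, h⟩ := hg
    exact ⟨ε, hε, fun t ht => h (by simpa [Real.dist_eq] using ht)⟩
  obtain ⟨δ₃, hδ₃, hP₃⟩ : ∃ δ > 0, ∀ t, |t| < δ → g 0 ≤ g t := by
    have hmin2 : ∀ᶠ t in nhds (0:ℝ), g 0 ≤ g t := hmin
    rw [Metric.eventually_nhds_iff] at hmin2
    obtain ⟨ε, hε, h⟩ := hmin2
    exact ⟨ε, hε, fun t ht => h (by simpa [Real.dist_eq] using ht)⟩
  set δ := min (min δ₁ δ₂) δ₃ / 2 with hδdef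
  have hδ : 0 < δ := by positivity
  have hmem : ∀ t ∈ Icc (0:ℝ) δ, |t| < min (min δ₁ δ₂) δ₃ := by
    intro t ht
    rw [abs_of_nonneg ht.1]
    calc t ≤ δ := ht.2
    _ < min (min δ₁ δ₂) δ₃ := by
        rw [hδdef]; linarith [lt_min (lt_min hδ₁ hδ₂) hδ₃]
  have hanti : StrictAntiOn g (Icc 0 δ) := by
    apply strictAntiOn_of_deriv_neg (convex_Icc 0 δ)
    · intro t ht
      exact (hP₂ t (lt_of_lt_of_le (hmem t ht) (le_trans (min_le_left _ _) (min_le_right _ _)))).continuousAt.continuousWithinAt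
    · intro t ht
      rw [interior_Icc] at ht
      have habs : |t| < min (min δ₁ δ₂) δ₃ := hmem t ⟨ht.1.le, ht.2.le⟩
      rw [(hP₂ t (lt_of_lt_of_le habs (le_trans (min_le_left _ _) (min_le_right _ _)))).deriv]
      exact hP₁ t (lt_of_lt_of_le habs (le_trans (min_le_left _ _) (min_le_left _ _))) ht.1
  have h5 : g δ < g 0 := hanti (left_mem_Icc.mpr hδ.le) (right_mem_Icc.mpr hδ.le) hδ
  have h6 : g 0 ≤ g δ := hP₃ δ (by rw [abs_of_nonneg hδ.le]; exact lt_of_le_of_lt (le_refl _) (by rw [hδdef]; linarith [lt_min (lt_min hδ₁ hδ₂) hδ₃, min_le_right (min δ₁ δ₂) δ₃]))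
  linarith

noncomputable def lapl (d : ℕ) (w : EuclideanSpace ℝ (Fin d) → ℝ)
    (x : EuclideanSpace ℝ (Fin d)) : ℝ :=
  ∑ i, fderiv ℝ (fun y => fderiv ℝ w y (EuclideanSpace.single i (1:ℝ))) x
    (EuclideanSpace.single i (1:ℝ))

lemma lapl_nonneg_of_isMinOn (d : ℕ) (O : Set (EuclideanSpace ℝ (Fin d))) (hO : IsOpen O)
    (w : EuclideanSpace ℝ (Fin d) → ℝ) (hw : ContDiffOn ℝ 2 w O)
    (x₀ : EuclideanSpace ℝ (Fin d)) (hx : x₀ ∈ O) (hmin : ∀ y ∈ O, w x₀ ≤ w y) :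
    0 ≤ lapl d w x₀ := by
  have hdiffO : ∀ y ∈ O, DifferentiableAt ℝ w y := fun y hy =>
    (hw.contDiffAt (hO.mem_nhds hy)).differentiableAt two_ne_zero
  have hfd : ContDiffAt ℝ 1 (fderiv ℝ w) x₀ :=
    (hw.contDiffAt (hO.mem_nhds hx)).fderiv_right (le_refl 2)
  apply Finset.sum_nonneg
  intro i _
  set u := EuclideanSpace.single i (1:ℝ) with hu
  -- the line map
  set ℓ : ℝ → EuclideanSpace ℝ (Fin d) := fun t => x₀ + t • u with hℓ
  have hℓc : Continuous ℓ := by fun_prop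
  have hℓd : ∀ t, HasDerivAt ℓ u t := by
    intro t
    simpa [hℓ] using ((hasDerivAt_id t).smul_const u).const_add x₀
  have hmemO : ∀ᶠ t in nhds (0:ℝ), ℓ t ∈ O := by
    have : ℓ 0 = x₀ := by simp [hℓ]
    have := hℓc.continuousAt (x := (0:ℝ)) |>.preimage_mem_nhds (by rw [this]; exact hO.mem_nhds hx)
    exact this
  set g : ℝ → ℝ := fun t => w (ℓ t) with hgdef
  set g' : ℝ → ℝ := fun t => fderiv ℝ w (ℓ t) u with hg'def
  have hg : ∀ᶠ t in nhds (0:ℝ), HasDerivAt g (g' t) t := by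
    filter_upwards [hmemO] with t ht
    exact ((hdiffO _ ht).hasFDerivAt.comp_hasDerivAt t (hℓd t))
  have hg' : HasDerivAt g' (fderiv ℝ (fun y => fderiv ℝ w y u) x₀ u) 0 := by
    have houter : DifferentiableAt ℝ (fun y => fderiv ℝ w y u) x₀ :=
      (hfd.differentiableAt one_ne_zero).clm_apply (differentiableAt_const _)
    have hℓ0 : ℓ 0 = x₀ := by simp [hℓ]
    rw [← hℓ0] at houter
    have := houter.hasFDerivAt.comp_hasDerivAt 0 (hℓd 0)
    rw [hℓ0] at this
    simpa [hg'def, hℓ, Function.comp_def] using this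
  have hming : IsLocalMin g 0 := by
    filter_upwards [hmemO] with t ht
    have : g 0 = w x₀ := by simp [hgdef, hℓ]
    rw [this]
    exact hmin _ ht
  exact second_deriv_nonneg g g' _ hming hg hg'

lemma exists_frontier_min (d : ℕ) (O : Set (EuclideanSpace ℝ (Fin d))) (hO : IsOpen O)
    (hOb : Bornology.IsBounded O) (hOne : O.Nonempty)
    (w : EuclideanSpace ℝ (Fin d) → ℝ) (hcont : ContinuousOn w (closure O))
    (hw : ContDiffOn ℝ 2 w O) (hlap : ∀ x ∈ O, lapl d w x < 0) :
    ∃ z ∈ frontier O, ∀ y ∈ closure O, w z ≤ w y := by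
  have hcomp : IsCompact (closure O) := hOb.isCompact_closure
  obtain ⟨x₀, hx₀, hmin⟩ := hcomp.exists_isMinOn hOne.closure hcont
  have hx₀f : x₀ ∈ frontier O := by
    rw [hO.frontier_eq]
    refine ⟨hx₀, fun hx₀O => ?_⟩
    have h0 := lapl_nonneg_of_isMinOn d O hO w hw x₀ hx₀O
      (fun y hy => hmin (subset_closure hy))
    exact absurd h0 (not_le.mpr (hlap x₀ hx₀O))
  exact ⟨x₀, hx₀f, fun y hy => hmin hy⟩

lemma lapl_sub (d : ℕ) (O : Set (EuclideanSpace ℝ (Fin d))) (hO : IsOpen O)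
    (u b : EuclideanSpace ℝ (Fin d) → ℝ) (hu : ContDiffOn ℝ 2 u O) (hb : ContDiff ℝ 2 b)
    (ε : ℝ) (x : EuclideanSpace ℝ (Fin d)) (hx : x ∈ O) :
    lapl d (fun y => u y - ε * b y) x = lapl d u x - ε * lapl d b x := by
  unfold lapl
  rw [Finset.mul_sum, ← Finset.sum_sub_distrib]
  apply Finset.sum_congr rfl
  intro i _
  set e := EuclideanSpace.single i (1:ℝ) with he
  have hbd : ∀ y, DifferentiableAt ℝ b y := fun y => hb.differentiable two_ne_zero y
  have key : (fun y => fderiv ℝ (fun z => u z - ε * b z) y e)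
      =ᶠ[nhds x] (fun y => fderiv ℝ u y e - ε * fderiv ℝ b y e) := by
    filter_upwards [hO.mem_nhds hx] with y hy
    have hud : DifferentiableAt ℝ u y := (hu.contDiffAt (hO.mem_nhds hy)).differentiableAt two_ne_zero
    rw [fderiv_fun_sub hud ((hbd y).const_mul ε), fderiv_const_mul (hbd y) ε]
    simp
  rw [key.fderiv_eq]
  have hDu : DifferentiableAt ℝ (fun y => fderiv ℝ u y e) x :=
    (((hu.contDiffAt (hO.mem_nhds hx)).fderiv_right (m := 1) (le_refl 2)).differentiableAt
      one_ne_zero).clm_apply (differentiableAt_const _)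
  have hDb : DifferentiableAt ℝ (fun y => fderiv ℝ b y e) x :=
    ((hb.contDiffAt.fderiv_right (m := 1) (le_refl 2)).differentiableAt
      one_ne_zero).clm_apply (differentiableAt_const _)
  rw [fderiv_fun_sub hDu (hDb.const_mul ε), fderiv_const_mul hDb ε]
  simp

lemma expCoord_contDiff (d : ℕ) (i₀ : Fin d) :
    ContDiff ℝ 2 (fun x : EuclideanSpace ℝ (Fin d) => Real.exp (x i₀)) :=
  (Real.contDiff_exp.of_le le_top).comp (contDiff_piLp_apply (p := 2))

lemma proj_hasFDerivAt (d : ℕ) (i₀ : Fin d) (x : EuclideanSpace ℝ (Fin d)) :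
    HasFDerivAt (fun y : EuclideanSpace ℝ (Fin d) => y i₀)
      (EuclideanSpace.proj i₀ : EuclideanSpace ℝ (Fin d) →L[ℝ] ℝ) x := by
  have := (EuclideanSpace.proj i₀ : EuclideanSpace ℝ (Fin d) →L[ℝ] ℝ).hasFDerivAt (x := x)
  convert this using 2
  rfl

lemma expCoord_hasFDerivAt (d : ℕ) (i₀ : Fin d) (x : EuclideanSpace ℝ (Fin d)) :
    HasFDerivAt (fun y : EuclideanSpace ℝ (Fin d) => Real.exp (y i₀))
      (Real.exp (x i₀) • (EuclideanSpace.proj i₀ : EuclideanSpace ℝ (Fin d) →L[ℝ] ℝ)) x :=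
  by have := (Real.hasDerivAt_exp (x i₀)).comp_hasFDerivAt x (proj_hasFDerivAt d i₀ x); exact this

lemma lapl_expCoord (d : ℕ) (i₀ : Fin d) (x : EuclideanSpace ℝ (Fin d)) :
    lapl d (fun y => Real.exp (y i₀)) x = Real.exp (x i₀) := by
  unfold lapl
  have key : ∀ i : Fin d,
      fderiv ℝ (fun y : EuclideanSpace ℝ (Fin d) =>
        fderiv ℝ (fun z : EuclideanSpace ℝ (Fin d) => Real.exp (z i₀)) y
          (EuclideanSpace.single i (1:ℝ))) x (EuclideanSpace.single i (1:ℝ))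
      = Real.exp (x i₀) * ((EuclideanSpace.single i (1:ℝ)) i₀ * (EuclideanSpace.single i (1:ℝ)) i₀) := by
    intro i
    set c : ℝ := (EuclideanSpace.single i (1:ℝ)) i₀ with hc
    have h1 : (fun y : EuclideanSpace ℝ (Fin d) =>
        fderiv ℝ (fun z : EuclideanSpace ℝ (Fin d) => Real.exp (z i₀)) y
          (EuclideanSpace.single i (1:ℝ))) = fun y => Real.exp (y i₀) * c := by
      funext y
      rw [(expCoord_hasFDerivAt d i₀ y).fderiv]
      rw [ContinuousLinearMap.smul_apply, PiLp.proj_apply, smul_eq_mul, hc]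
    rw [h1]
    have h2 : HasFDerivAt (fun y : EuclideanSpace ℝ (Fin d) => Real.exp (y i₀) * c)
        (c • (Real.exp (x i₀) • (EuclideanSpace.proj i₀ : EuclideanSpace ℝ (Fin d) →L[ℝ] ℝ))) x := by
      have := (expCoord_hasFDerivAt d i₀ x).mul_const c
      convert this using 1
    rw [h2.fderiv]
    rw [ContinuousLinearMap.smul_apply, ContinuousLinearMap.smul_apply, PiLp.proj_apply]
    simp only [smul_eq_mul]
    ring
  rw [Finset.sum_congr rfl (fun i _ => key i)]
  rw [← Finset.mul_sum]
  have h3 : ∀ i : Fin d, ((EuclideanSpace.single i (1:ℝ)) i₀ * (EuclideanSpace.single i (1:ℝ)) i₀)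
      = if i₀ = i then 1 else 0 := by
    intro i
    rw [EuclideanSpace.single_apply]
    by_cases h : i₀ = i <;> simp [h]
  rw [Finset.sum_congr rfl (fun i _ => h3 i), Finset.sum_ite_eq]
  simp

lemma weak_min_principle (d : ℕ) (hd : 1 ≤ d) (O : Set (EuclideanSpace ℝ (Fin d)))
    (hO : IsOpen O) (hOb : Bornology.IsBounded O) (hOne : O.Nonempty)
    (w : EuclideanSpace ℝ (Fin d) → ℝ) (hcont : ContinuousOn w (closure O))
    (hw : ContDiffOn ℝ 2 w O) (hlap : ∀ x ∈ O, lapl d w x = 0)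
    (m : ℝ) (hm : ∀ z ∈ frontier O, m ≤ w z) :
    ∀ y ∈ closure O, m ≤ w y := by
  intro y hy
  set i₀ : Fin d := ⟨0, hd⟩ with hi₀
  set b : EuclideanSpace ℝ (Fin d) → ℝ := fun x => Real.exp (x i₀) with hb
  have hbcd : ContDiff ℝ 2 b := expCoord_contDiff d i₀
  have hbc : Continuous b := hbcd.continuous
  have hbpos : ∀ x, 0 < b x := fun x => Real.exp_pos _
  obtain ⟨C, hCpos, hC⟩ : ∃ C : ℝ, 0 < C ∧ ∀ x ∈ closure O, b x ≤ C := by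
    obtain ⟨C, hC⟩ := (hOb.isCompact_closure.image_of_continuousOn hbc.continuousOn).bddAbove
    refine ⟨max C 1, lt_of_lt_of_le one_pos (le_max_right _ _), fun x hx => ?_⟩
    exact le_trans (hC (Set.mem_image_of_mem b hx)) (le_max_left _ _)
  apply le_of_forall_pos_le_add
  intro ε' hε'
  set ε : ℝ := ε' / C with hε
  have hεpos : 0 < ε := div_pos hε' hCpos
  set wε : EuclideanSpace ℝ (Fin d) → ℝ := fun x => w x - ε * b x with hwε
  have h1 : ContinuousOn wε (closure O) := hcont.sub ((hbc.continuousOn).const_smul ε)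
  have h2 : ContDiffOn ℝ 2 wε O := hw.sub ((hbcd.const_smul ε).contDiffOn)
  have h3 : ∀ x ∈ O, lapl d wε x < 0 := by
    intro x hx
    rw [hwε]
    rw [lapl_sub d O hO w b hw hbcd ε x hx, hlap x hx, lapl_expCoord d i₀ x]
    simp only [zero_sub, neg_neg, neg_lt_zero]
    positivity
  obtain ⟨z, hzf, hzmin⟩ := exists_frontier_min d O hO hOb hOne wε h1 h2 h3
  have hzc : z ∈ closure O := frontier_subset_closure hzf
  have key : m - ε * C ≤ wε z := by
    have h4 : b z ≤ C := hC z hzc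
    have h5 : m ≤ w z := hm z hzf
    rw [hwε]
    simp only
    nlinarith
  have h6 : wε z ≤ wε y := hzmin y hy
  have h7 : wε y ≤ w y := by
    rw [hwε]; simp only
    nlinarith [hbpos y]
  have h8 : ε * C = ε' := by
    rw [hε]; field_simp
  linarith

section barrier
variable {d : ℕ} (p : EuclideanSpace ℝ (Fin d)) (α : ℝ)

noncomputable def Qf (p : EuclideanSpace ℝ (Fin d)) : EuclideanSpace ℝ (Fin d) → ℝ :=
  fun x => ∑ j, (x j - p j)^2

lemma Qf_eq_dist (x : EuclideanSpace ℝ (Fin d)) : Qf p x = dist x p ^ 2 := by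
  rw [EuclideanSpace.dist_eq, Real.sq_sqrt (by positivity)]
  simp [Real.dist_eq, sq_abs, Qf]

noncomputable def DQ (p : EuclideanSpace ℝ (Fin d)) (x : EuclideanSpace ℝ (Fin d)) :
    EuclideanSpace ℝ (Fin d) →L[ℝ] ℝ :=
  ∑ j, (2 * (x j - p j)) • (EuclideanSpace.proj j : EuclideanSpace ℝ (Fin d) →L[ℝ] ℝ)

lemma Qf_hasFDerivAt (x : EuclideanSpace ℝ (Fin d)) : HasFDerivAt (Qf p) (DQ p x) x := by
  apply HasFDerivAt.fun_sum
  intro j _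
  have h1 : HasDerivAt (fun t : ℝ => (t - p j)^2) (2 * (x j - p j)) (x j) := by
    have := ((hasDerivAt_id (x j)).sub_const (p j)).fun_pow 2
    simpa [mul_comm] using this
  exact h1.comp_hasFDerivAt x (proj_hasFDerivAt d j x)

lemma DQ_apply_single (x : EuclideanSpace ℝ (Fin d)) (i : Fin d) :
    DQ p x (EuclideanSpace.single i (1:ℝ)) = 2 * (x i - p i) := by
  rw [DQ, ContinuousLinearMap.sum_apply]
  have h : ∀ j : Fin d, ((2 * (x j - p j)) • (EuclideanSpace.proj j :
      EuclideanSpace ℝ (Fin d) →L[ℝ] ℝ)) (EuclideanSpace.single i (1:ℝ))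
      = if j = i then 2 * (x j - p j) else 0 := by
    intro j
    rw [ContinuousLinearMap.smul_apply, PiLp.proj_apply, EuclideanSpace.single_apply,
      smul_eq_mul]
    by_cases hji : j = i <;> simp [hji]
  rw [Finset.sum_congr rfl (fun j _ => h j), Finset.sum_ite_eq']
  simp

noncomputable def bb (p : EuclideanSpace ℝ (Fin d)) (α : ℝ) :
    EuclideanSpace ℝ (Fin d) → ℝ := fun x => Real.exp (-α * Qf p x)

lemma Qf_contDiff : ContDiff ℝ 2 (Qf p) := by
  apply ContDiff.sum
  intro j _
  have : ContDiff ℝ 2 (fun x : EuclideanSpace ℝ (Fin d) => x j) :=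
    (contDiff_piLp_apply (p := 2))
  exact (this.sub contDiff_const).pow 2

lemma bb_contDiff : ContDiff ℝ 2 (bb p α) :=
  (Real.contDiff_exp.of_le le_top).comp ((Qf_contDiff p).const_smul (-α))

lemma bb_hasFDerivAt (x : EuclideanSpace ℝ (Fin d)) :
    HasFDerivAt (bb p α) ((Real.exp (-α * Qf p x) * (-α)) • DQ p x) x := by
  have h1 : HasFDerivAt (fun y => -α * Qf p y) ((-α) • DQ p x) x :=
    (Qf_hasFDerivAt p x).const_smul (-α)
  have h2 := (Real.hasDerivAt_exp (-α * Qf p x)).comp_hasFDerivAt x h1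
  rw [smul_smul] at h2; exact h2

lemma bb_fderiv_single (i : Fin d) :
    (fun y => fderiv ℝ (bb p α) y (EuclideanSpace.single i (1:ℝ)))
    = fun y => (-2*α) * ((y i - p i) * Real.exp (-α * Qf p y)) := by
  funext y
  rw [(bb_hasFDerivAt p α y).fderiv, ContinuousLinearMap.smul_apply,
    DQ_apply_single, smul_eq_mul]
  ring

lemma lapl_bb (x : EuclideanSpace ℝ (Fin d)) :
    lapl d (bb p α) x = Real.exp (-α * Qf p x) * (4*α^2 * Qf p x - 2*d*α) := by
  unfold lapl
  have key : ∀ i : Fin d,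
      fderiv ℝ (fun y => fderiv ℝ (bb p α) y (EuclideanSpace.single i (1:ℝ))) x
        (EuclideanSpace.single i (1:ℝ))
      = Real.exp (-α * Qf p x) * (4*α^2*(x i - p i)^2 - 2*α) := by
    intro i
    rw [bb_fderiv_single]
    -- product rule
    have hG : HasFDerivAt (fun y : EuclideanSpace ℝ (Fin d) => y i - p i)
        (EuclideanSpace.proj i : EuclideanSpace ℝ (Fin d) →L[ℝ] ℝ) x :=
      (proj_hasFDerivAt d i x).sub_const (p i)
    have hH : HasFDerivAt (fun y => Real.exp (-α * Qf p y))
        ((Real.exp (-α * Qf p x) * (-α)) • DQ p x) x := bb_hasFDerivAt p α x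
    have hprod := (hG.fun_mul hH).const_mul (-2*α)
    rw [hprod.fderiv]
    rw [ContinuousLinearMap.smul_apply, ContinuousLinearMap.add_apply,
      ContinuousLinearMap.smul_apply, ContinuousLinearMap.smul_apply,
      ContinuousLinearMap.smul_apply, DQ_apply_single, PiLp.proj_apply,
      EuclideanSpace.single_apply]
    simp only [smul_eq_mul, eq_self_iff_true, if_true]
    ring
  rw [Finset.sum_congr rfl (fun i _ => key i), ← Finset.mul_sum]
  congr 1
  rw [Finset.sum_sub_distrib, ← Finset.mul_sum]
  have : ∑ i : Fin d, (x i - p i)^2 = Qf p x := rfl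
  rw [this]
  simp [Finset.sum_const, Finset.card_univ]
  ring
end barrier

set_option maxHeartbeats 1000000 in
/-- Positivity lemma: if `v` is continuous on the closure of a bounded connected open
set `Ω` whose boundary splits into disjoint pieces `Γ` and `Sg`, `v` is harmonic on `Ω`,
vanishes on `Γ`, and has a strictly positive outward normal derivative at every point of
`Sg` (in the one-sided-limit sense), then `v > 0` on `Ω`. -/
theorem positivity_of_harmonic_with_positive_flux
    (d : ℕ) (hd : 1 ≤ d)
    (Ω : Set (EuclideanSpace ℝ (Fin d))) (hΩne : Ω.Nonempty)
    (hΩo : IsOpen Ω) (hΩb : Bornology.IsBounded Ω) (hΩconn : IsConnected Ω)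
    (Γ Sg : Set (EuclideanSpace ℝ (Fin d)))
    (hΓne : Γ.Nonempty) (hSgne : Sg.Nonempty)
    (hbd : frontier Ω = Γ ∪ Sg) (hdisj : Disjoint Γ Sg)
    (v : EuclideanSpace ℝ (Fin d) → ℝ)
    (hcont : ContinuousOn v (closure Ω))
    (hsmooth : ContDiffOn ℝ 2 v Ω)
    (hharm : ∀ x ∈ Ω,
      ∑ i, fderiv ℝ (fun y => fderiv ℝ v y (EuclideanSpace.single i (1:ℝ))) x
        (EuclideanSpace.single i (1:ℝ)) = 0)
    (hΓ0 : ∀ x ∈ Γ, v x = 0)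
    (ν : EuclideanSpace ℝ (Fin d) → EuclideanSpace ℝ (Fin d))
    (hν : ∀ x ∈ Sg, ∃ δ : ℝ, 0 < δ ∧ ∀ t ∈ Set.Ioo (0:ℝ) δ, x - t • ν x ∈ Ω)
    (hflux : ∀ x ∈ Sg, ∃ L : ℝ, 0 < L ∧ Filter.Tendsto
      (fun t : ℝ => (v x - v (x - t • ν x)) / t)
      (nhdsWithin 0 (Set.Ioi 0)) (nhds L)) :
    ∀ x ∈ Ω, 0 < v x := by
  have hlapv : ∀ x ∈ Ω, lapl d v x = 0 := hharm
  -- Step A: v ≥ 0 on closure Ω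
  have hfc : IsCompact (frontier Ω) :=
    IsCompact.of_isClosed_subset hΩb.isCompact_closure isClosed_frontier frontier_subset_closure
  have hfne : (frontier Ω).Nonempty := by
    obtain ⟨γ, hγ⟩ := hΓne
    exact ⟨γ, by rw [hbd]; exact Or.inl hγ⟩
  obtain ⟨z₀, hz₀f, hz₀min⟩ := hfc.exists_isMinOn hfne (hcont.mono frontier_subset_closure)
  have hminall : ∀ y ∈ closure Ω, v z₀ ≤ v y :=
    weak_min_principle d hd Ω hΩo hΩb hΩne v hcont hsmooth hlapv (v z₀)
      (fun z hz => hz₀min hz)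
  have hz₀Γ : z₀ ∈ Γ := by
    have := hz₀f
    rw [hbd] at this
    rcases this with h | h
    · exact h
    · exfalso
      obtain ⟨δ, hδ, hmem⟩ := hν z₀ h
      obtain ⟨L, hL, hLt⟩ := hflux z₀ h
      have hev : ∀ᶠ t in nhdsWithin (0:ℝ) (Set.Ioi 0),
          (v z₀ - v (z₀ - t • ν z₀)) / t ≤ 0 := by
        filter_upwards [Ioo_mem_nhdsGT_of_mem (Set.mem_Ico.mpr ⟨le_refl (0:ℝ), hδ⟩)] with t ht
        have h1 : v z₀ ≤ v (z₀ - t • ν z₀) :=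
          hminall _ (subset_closure (hmem t ht))
        apply div_nonpos_of_nonpos_of_nonneg <;> linarith [ht.1]
      have : L ≤ 0 := le_of_tendsto hLt hev
      linarith
  have hvz₀ : v z₀ = 0 := hΓ0 z₀ hz₀Γ
  have hv0 : ∀ y ∈ closure Ω, 0 ≤ v y := by
    intro y hy; rw [← hvz₀]; exact hminall y hy
  -- Step B
  intro x hx
  by_contra hxpos
  push_neg at hxpos
  have hvx0 : v x = 0 := le_antisymm hxpos (hv0 x (subset_closure hx))
  set U : Set (EuclideanSpace ℝ (Fin d)) := Ω ∩ v ⁻¹' (Set.Ioi 0) with hUdef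
  have hUopen : IsOpen U :=
    (hcont.mono subset_closure).isOpen_inter_preimage hΩo isOpen_Ioi
  by_cases hU : U.Nonempty
  · -- Hopf argument
    -- find z ∈ Z touching closure U
    obtain ⟨z, hzΩ, hvz, hzclU⟩ : ∃ z, z ∈ Ω ∧ v z = 0 ∧ z ∈ closure U := by
      by_contra hno
      push_neg at hno
      obtain ⟨q, hqΩ, hqU⟩ := hΩconn.isPreconnected U (closure U)ᶜ hUopen
        isClosed_closure.isOpen_compl
        (by
          intro y hy
          rcases lt_or_eq_of_le (hv0 y (subset_closure hy)) with h | h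
          · exact Or.inl ⟨hy, h⟩
          · exact Or.inr (hno y hy h.symm))
        (by obtain ⟨q, hq⟩ := hU; exact ⟨q, hq.1, hq⟩)
        (by
          refine ⟨x, hx, ?_⟩
          exact hno x hx hvx0)
      exact hqU.2 (subset_closure hqU.1)
    obtain ⟨R, hR, hball⟩ := Metric.isOpen_iff.mp hΩo z hzΩ
    obtain ⟨p, hpball, hpU⟩ : ∃ p, p ∈ Metric.ball z (R/8) ∧ p ∈ U := by
      have := Metric.mem_closure_iff.mp hzclU (R/8) (by positivity)
      obtain ⟨p, hpU, hpd⟩ := this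
      exact ⟨p, by rwa [Metric.mem_ball, dist_comm], hpU⟩
    have hpdist : dist p z < R/8 := Metric.mem_ball.mp hpball
    have hKclosed0 : IsClosed (closure Ω ∩ v ⁻¹' {0}) :=
      hcont.preimage_isClosed_of_isClosed isClosed_closure isClosed_singleton
    set K : Set (EuclideanSpace ℝ (Fin d)) :=
      Metric.closedBall p (R/4) ∩ (closure Ω ∩ v ⁻¹' {0}) with hKdef
    have hKc : IsCompact K :=
      (isCompact_closedBall p (R/4)).inter_right hKclosed0
    have hKclosed : IsClosed K := (Metric.isClosed_closedBall).inter hKclosed0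
    have hzK : z ∈ K := by
      refine ⟨Metric.mem_closedBall.mpr ?_, subset_closure hzΩ, hvz⟩
      rw [dist_comm]; linarith
    have hpK : p ∉ K := by
      intro hpk
      have : v p = 0 := hpk.2.2
      have : (0:ℝ) < 0 := by
        have := hpU.2; rw [Set.mem_preimage, Set.mem_Ioi] at this; linarith
      linarith
    set r : ℝ := Metric.infDist p K with hrdef
    obtain ⟨x₀, hx₀K, hx₀d⟩ := hKc.exists_infDist_eq_dist ⟨z, hzK⟩ p
    have hrpos : 0 < r := (hKclosed.notMem_iff_infDist_pos ⟨z, hzK⟩).mp hpK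
    have hrle : r ≤ dist p z := Metric.infDist_le_dist_of_mem hzK
    have hsubΩ : Metric.closedBall p r ⊆ Ω := by
      intro y hy
      apply hball
      rw [Metric.mem_ball]
      calc dist y z ≤ dist y p + dist p z := dist_triangle _ _ _
        _ ≤ r + R/8 := add_le_add (Metric.mem_closedBall.mp hy) hpdist.le
        _ < R := by linarith
    have hposball : ∀ y, dist y p < r → 0 < v y := by
      intro y hy
      have hyΩ : y ∈ Ω := hsubΩ (Metric.mem_closedBall.mpr hy.le)
      rcases lt_or_eq_of_le (hv0 y (subset_closure hyΩ)) with h | h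
      · exact h
      · exfalso
        have hyK : y ∈ K := by
          refine ⟨Metric.mem_closedBall.mpr ?_, subset_closure hyΩ, h.symm⟩
          linarith
        have h2 : Metric.infDist p K ≤ dist p y := Metric.infDist_le_dist_of_mem hyK
        rw [dist_comm p y] at h2
        rw [hrdef] at hy
        linarith
    -- annulus
    set A : Set (EuclideanSpace ℝ (Fin d)) :=
      Metric.ball p r \ Metric.closedBall p (r/2) with hAdef
    have hAopen : IsOpen A := Metric.isOpen_ball.sdiff Metric.isClosed_closedBall
    have hAb : Bornology.IsBounded A :=
      (Metric.isBounded_ball).subset Set.diff_subset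
    set i₀ : Fin d := ⟨0, hd⟩ with hi₀
    have hnorm34 : ∀ s : ℝ, 0 ≤ s → ‖s • EuclideanSpace.single i₀ (1:ℝ)‖ = s := by
      intro s hs
      rw [norm_smul, EuclideanSpace.norm_single, Real.norm_eq_abs, abs_of_nonneg hs, norm_one,
        mul_one]
    have hAne : A.Nonempty := by
      refine ⟨p + (3*r/4) • EuclideanSpace.single i₀ (1:ℝ), ?_, ?_⟩
      · rw [Metric.mem_ball, dist_self_add_left, hnorm34 _ (by positivity)]
        linarith
      · intro hmem'
        rw [Metric.mem_closedBall, dist_self_add_left, hnorm34 _ (by positivity)] at hmem'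
        linarith
    have hclAΩ : closure A ⊆ Ω := by
      intro y hy
      apply hsubΩ
      have h1 := closure_mono (Set.diff_subset :
        A ⊆ Metric.ball p r) hy
      rwa [closure_ball p hrpos.ne'] at h1
    have hAsubΩ : A ⊆ Ω := fun y hy => hclAΩ (subset_closure hy)
    set α : ℝ := (2*(d:ℝ)+1)/r^2 with hα
    have hαpos : 0 < α := by positivity
    have hαr : α * r^2 = 2*(d:ℝ)+1 := by rw [hα]; field_simp
    have hlapbbA : ∀ y ∈ A, 0 < lapl d (bb p α) y := by
      intro y hy
      rw [lapl_bb]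
      have hQ : Qf p y = dist y p ^2 := Qf_eq_dist p y
      have h1 : r/2 < dist y p := by
        have h2 := hy.2
        rw [Metric.mem_closedBall, not_le] at h2
        exact h2
      have h2 : (r/2)^2 ≤ Qf p y := by rw [hQ]; nlinarith [dist_nonneg (x := y) (y := p)]
      have h3 : 0 < 4*α^2 * Qf p y - 2*(d:ℝ)*α := by nlinarith [hαpos, hrpos, sq_nonneg α]
      positivity
    -- inner sphere minimum
    have hsphΩ : Metric.sphere p (r/2) ⊆ Ω := by
      intro y hy
      rw [Metric.mem_sphere] at hy
      exact hsubΩ (Metric.mem_closedBall.mpr (by rw [hy]; linarith))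
    have hspne : (Metric.sphere p (r/2)).Nonempty := by
      refine ⟨p + (r/2) • EuclideanSpace.single i₀ (1:ℝ), ?_⟩
      rw [Metric.mem_sphere, dist_self_add_left, hnorm34 _ (by positivity)]
    obtain ⟨y₂, hy₂S, hy₂min⟩ := (isCompact_sphere p (r/2)).exists_isMinOn hspne
      (hcont.mono (fun y hy => subset_closure (hsphΩ hy)))
    set ε : ℝ := v y₂ with hε
    have hεpos : 0 < ε := by
      apply hposball
      rw [Metric.mem_sphere.mp hy₂S]
      linarith
    -- weak minimum principle on the annulus
    set w : EuclideanSpace ℝ (Fin d) → ℝ := fun y => v y - ε * bb p α y with hw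
    have hwc : ContinuousOn w (closure A) :=
      (hcont.mono (fun y hy => subset_closure (hclAΩ hy))).sub
        (((bb_contDiff p α).continuous.continuousOn).const_smul ε)
    have hwsm : ContDiffOn ℝ 2 w A := (hsmooth.mono hAsubΩ).sub
      (((bb_contDiff p α).const_smul ε).contDiffOn)
    have hwlap : ∀ y ∈ A, lapl d w y < 0 := by
      intro y hy
      rw [hw, lapl_sub d A hAopen v (bb p α) (hsmooth.mono hAsubΩ) (bb_contDiff p α) ε y hy,
        hlapv y (hAsubΩ hy)]
      nlinarith [hlapbbA y hy, hεpos]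
    obtain ⟨ζ, hζf, hζmin⟩ := exists_frontier_min d A hAopen hAb hAne w hwc hwsm hwlap
    have hfrA : frontier A ⊆ Metric.sphere p r ∪ Metric.sphere p (r/2) := by
      rw [hAdef, Set.diff_eq]
      refine (frontier_inter_subset _ _).trans ?_
      intro y hy
      rcases hy with ⟨h, _⟩ | ⟨_, h⟩
      · left; rwa [frontier_ball p hrpos.ne'] at h
      · right; rwa [frontier_compl, frontier_closedBall p (by positivity : r/2 ≠ 0)] at h
    have hbbval : ∀ y, bb p α y = Real.exp (-α * Qf p y) := fun y => rfl
    have hζlow : -(ε * Real.exp (-α * r^2)) ≤ w ζ := by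
      rcases hfrA hζf with h | h
      · rw [Metric.mem_sphere] at h
        have hvζ : 0 ≤ v ζ := hv0 ζ (subset_closure (hsubΩ (Metric.mem_closedBall.mpr h.le)))
        have hbbζ : bb p α ζ = Real.exp (-α * r^2) := by
          rw [hbbval, Qf_eq_dist, h]
        rw [hw]
        simp only
        rw [hbbζ]
        linarith
      · have hvζ : ε ≤ v ζ := hy₂min h
        have hQζ : 0 ≤ Qf p ζ := by rw [Qf_eq_dist]; positivity
        have hbbζ : bb p α ζ ≤ 1 := by
          rw [hbbval]
          apply Real.exp_le_one_iff.mpr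
          nlinarith
        have h0 : 0 ≤ w ζ := by
          rw [hw]; simp only
          nlinarith
        have h1 : 0 < ε * Real.exp (-α * r^2) := by positivity
        linarith
    have hlow : ∀ y ∈ closure A, ε * (bb p α y - Real.exp (-α * r^2)) ≤ v y := by
      intro y hy
      have h2 := hζmin y hy
      rw [hw] at h2
      simp only at h2
      have hζlow' : -(ε * Real.exp (-α * r^2)) ≤ v ζ - ε * bb p α ζ := hζlow
      have h3 : ε * (bb p α y - Real.exp (-α * r^2))
          = ε * bb p α y - ε * Real.exp (-α * r^2) := by ring
      rw [h3]
      linarith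
    -- the touching point x₀ and the segment towards p
    have hdx₀ : dist p x₀ = r := by rw [hrdef, hx₀d]
    have hx₀Ω : x₀ ∈ Ω := hsubΩ (Metric.mem_closedBall.mpr (by rw [dist_comm]; exact hdx₀.le))
    have hvx₀ : v x₀ = 0 := hx₀K.2.2
    have hnormx₀ : ‖x₀ - p‖ = r := by rw [← dist_eq_norm, dist_comm]; exact hdx₀
    set γ : ℝ → EuclideanSpace ℝ (Fin d) := fun t => x₀ + t • (p - x₀) with hγ
    have hγsub : ∀ t : ℝ, γ t - p = (1 - t) • (x₀ - p) := by
      intro t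
      show x₀ + t • (p - x₀) - p = (1 - t) • (x₀ - p)
      rw [sub_smul, one_smul, smul_sub, smul_sub]
      abel
    have hγd : ∀ t ∈ Set.Icc (0:ℝ) (1/2 : ℝ), dist (γ t) p = (1-t) * r := by
      intro t ht
      rw [dist_eq_norm, hγsub, norm_smul, hnormx₀, Real.norm_eq_abs,
        abs_of_nonneg (by linarith [ht.2])]
    have hγA : ∀ t ∈ Set.Ioo (0:ℝ) (1/2 : ℝ), γ t ∈ A := by
      intro t ht
      constructor
      · rw [Metric.mem_ball, hγd t ⟨ht.1.le, ht.2.le⟩]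
        nlinarith [hrpos, ht.1, ht.2]
      · intro hmem'
        rw [Metric.mem_closedBall, hγd t ⟨ht.1.le, ht.2.le⟩] at hmem'
        nlinarith [hrpos, ht.1, ht.2]
    have hlocmin : IsLocalMin v x₀ := by
      filter_upwards [hΩo.mem_nhds hx₀Ω] with y hy
      rw [hvx₀]
      exact hv0 y (subset_closure hy)
    have hfder : fderiv ℝ v x₀ = 0 := hlocmin.fderiv_eq_zero
    have hγder : HasDerivAt γ (p - x₀) 0 := by
      simpa [hγ] using ((hasDerivAt_id (0:ℝ)).smul_const (p - x₀)).const_add x₀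
    have hvdiff : DifferentiableAt ℝ v x₀ :=
      (hsmooth.contDiffAt (hΩo.mem_nhds hx₀Ω)).differentiableAt two_ne_zero
    have hγ0 : γ 0 = x₀ := by rw [hγ]; simp
    have hgder : HasDerivAt (fun t => v (γ t)) 0 0 := by
      rw [← hγ0] at hvdiff
      have h1 := hvdiff.hasFDerivAt.comp_hasDerivAt 0 hγder
      rw [hγ0, hfder] at h1
      simpa [Function.comp_def] using h1
    have hslopeg : Filter.Tendsto (fun t => v (γ t) / t) (nhdsWithin 0 (Set.Ioi 0)) (nhds 0) := by
      have h1 := (hasDerivAt_iff_tendsto_slope.mp hgder).mono_left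
        (nhdsWithin_mono _ (fun t (ht : t ∈ Set.Ioi (0:ℝ)) => ne_of_gt ht))
      apply h1.congr'
      filter_upwards [self_mem_nhdsWithin] with t ht
      rw [slope_def_field, hγ0, hvx₀]
      simp [div_eq_inv_mul]
    set c₂ : ℝ := ε * (Real.exp (-α * r^2) * (2*α*r^2)) with hc₂
    have hc₂pos : 0 < c₂ := by positivity
    set ψ : ℝ → ℝ := fun t => ε * (Real.exp (-α * ((1-t)*r)^2) - Real.exp (-α * r^2)) with hψ
    have hψ0 : ψ 0 = 0 := by rw [hψ]; simp
    have hψder : HasDerivAt ψ c₂ 0 := by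
      have h2 : HasDerivAt (fun t : ℝ => (1-t)*r) (-r) 0 := by
        simpa using ((hasDerivAt_const (0:ℝ) (1:ℝ)).sub (hasDerivAt_id 0)).mul_const r
      have h3 := h2.fun_pow 2
      have h4 := h3.const_mul (-α)
      have h5 := h4.exp
      have h6 := (h5.sub_const (Real.exp (-α * r^2))).const_mul ε
      refine h6.congr_deriv ?_
      rw [hc₂]
      simp only [sub_zero, one_mul, pow_one, Nat.cast_ofNat]
      ring
    have hslopeψ : Filter.Tendsto (fun t => ψ t / t) (nhdsWithin 0 (Set.Ioi 0)) (nhds c₂) := by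
      have h1 := (hasDerivAt_iff_tendsto_slope.mp hψder).mono_left
        (nhdsWithin_mono _ (fun t (ht : t ∈ Set.Ioi (0:ℝ)) => ne_of_gt ht))
      apply h1.congr'
      filter_upwards [self_mem_nhdsWithin] with t ht
      rw [slope_def_field, hψ0]
      simp [div_eq_inv_mul]
    have hcomp : ∀ᶠ t in nhdsWithin (0:ℝ) (Set.Ioi 0), ψ t / t ≤ v (γ t) / t := by
      filter_upwards [Ioo_mem_nhdsGT_of_mem
        (Set.mem_Ico.mpr ⟨le_refl (0:ℝ), (by norm_num : (0:ℝ) < 1/2)⟩ :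
          (0:ℝ) ∈ Set.Ico (0:ℝ) (1/2:ℝ)), self_mem_nhdsWithin] with t ht htpos
      have htpos' : (0:ℝ) < t := htpos
      have hA' : γ t ∈ A := hγA t ht
      have h1 := hlow (γ t) (subset_closure hA')
      have h2 : bb p α (γ t) = Real.exp (-α * ((1-t)*r)^2) := by
        rw [hbbval, Qf_eq_dist, hγd t ⟨ht.1.le, ht.2.le⟩]
      rw [h2] at h1
      have h3 : ψ t ≤ v (γ t) := h1
      exact (div_le_div_iff_of_pos_right htpos').mpr h3
    have hfinal : c₂ ≤ 0 := le_of_tendsto_of_tendsto hslopeψ hslopeg hcomp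
    linarith
  · -- v ≡ 0 on Ω : contradiction with flux at a point of Sg
    obtain ⟨xs, hxs⟩ := hSgne
    obtain ⟨δ, hδ, hmem⟩ := hν xs hxs
    obtain ⟨L, hL, hLt⟩ := hflux xs hxs
    have hzero : ∀ y ∈ Ω, v y = 0 := by
      intro y hy
      rcases lt_or_eq_of_le (hv0 y (subset_closure hy)) with h | h
      · exact absurd ⟨hy, h⟩ (fun hyU => hU ⟨y, hyU⟩)
      · exact h.symm
    have hxscl : xs ∈ closure Ω := frontier_subset_closure (by rw [hbd]; exact Or.inr hxs)
    -- v xs = 0 by continuity along the segment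
    have hφ : Filter.Tendsto (fun t : ℝ => xs - t • ν xs) (nhdsWithin 0 (Set.Ioi 0))
        (nhdsWithin xs (closure Ω)) := by
      rw [tendsto_nhdsWithin_iff]
      constructor
      · have hc : Continuous (fun t : ℝ => xs - t • ν xs) := by fun_prop
        have h0 : (fun t : ℝ => xs - t • ν xs) 0 = xs := by simp
        exact (hc.tendsto' 0 xs h0).mono_left nhdsWithin_le_nhds
      · filter_upwards [Ioo_mem_nhdsGT_of_mem (Set.mem_Ico.mpr ⟨le_refl (0:ℝ), hδ⟩)] with t ht
        exact subset_closure (hmem t ht)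
    have htend : Filter.Tendsto (fun t : ℝ => v (xs - t • ν xs)) (nhdsWithin 0 (Set.Ioi 0))
        (nhds (v xs)) := (hcont xs hxscl).tendsto.comp hφ
    have hev0 : (fun t : ℝ => v (xs - t • ν xs)) =ᶠ[nhdsWithin 0 (Set.Ioi 0)] (fun _ => 0) := by
      filter_upwards [Ioo_mem_nhdsGT_of_mem (Set.mem_Ico.mpr ⟨le_refl (0:ℝ), hδ⟩)] with t ht
      exact hzero _ (hmem t ht)
    have hvxs : v xs = 0 :=
      tendsto_nhds_unique (htend.congr' hev0) tendsto_const_nhds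
    have hqev : (fun t : ℝ => (v xs - v (xs - t • ν xs)) / t)
        =ᶠ[nhdsWithin 0 (Set.Ioi 0)] (fun _ => 0) := by
      filter_upwards [Ioo_mem_nhdsGT_of_mem (Set.mem_Ico.mpr ⟨le_refl (0:ℝ), hδ⟩)] with t ht
      rw [hvxs, hzero _ (hmem t ht)]
      simp
    have : L = 0 := tendsto_nhds_unique (hLt.congr' hqev) tendsto_const_nhds
    linarith
end

section
/- Fix real constants r*, R, f with 0 < r* < R and f > 0, and define F₁(r) = − f·(log r − log r*) / (r · log(R/r*) · (log R − log r)) for r ∈ (0, R). Let T > 0, let r₀ ∈ (r*, R), and let r : ℝ → ℝ satisfy r(0) = r₀, r(t) ∈ (0, R) for all t ∈ [0, T], and suppose r has derivative F₁(r(t)) at every t ∈ [0, T]. Then r(t) > r* for every t ∈ [0, T] (the evolving radius never reaches r* in finite time), and r′(t) = F₁(r(t)) < 0 for every t ∈ [0, T] (the radius is strictly decreasing). -/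
/-- Any solution of the two-dimensional concentric-circles ODE `r′ = F₁(r)` starting in
`(r*, R)` stays strictly above `r*` for all time in `[0, T]` and is strictly
decreasing there (`F₁(r(t)) < 0`). -/
theorem F1_ode_solution_stays_above_rstar_and_decreases
    (rstar R f : ℝ) (h1 : 0 < rstar) (h2 : rstar < R) (hf : 0 < f)
    (F1 : ℝ → ℝ)
    (hF1 : ∀ r, F1 r = -(f * (Real.log r - Real.log rstar)) /
      (r * Real.log (R / rstar) * (Real.log R - Real.log r)))
    (T : ℝ) (hT : 0 < T)
    (r₀ : ℝ) (hr₀ : r₀ ∈ Set.Ioo rstar R)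
    (r : ℝ → ℝ) (hinit : r 0 = r₀)
    (hrange : ∀ t ∈ Set.Icc (0:ℝ) T, r t ∈ Set.Ioo (0:ℝ) R)
    (hode : ∀ t ∈ Set.Icc (0:ℝ) T, HasDerivAt r (F1 (r t)) t) :
    ∀ t ∈ Set.Icc (0:ℝ) T, rstar < r t ∧ F1 (r t) < 0 := by
  have hL : 0 < Real.log (R / rstar) := Real.log_pos (by rw [lt_div_iff₀ h1]; linarith)
  have hcont : ∀ t ∈ Set.Icc (0:ℝ) T, ContinuousAt r t := fun t ht => (hode t ht).continuousAt
  have hmain : ∀ t ∈ Set.Icc (0:ℝ) T, rstar < r t := by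
    by_contra hcon
    push_neg at hcon
    obtain ⟨t₀, ht₀, ht₀le⟩ := hcon
    set S : Set ℝ := {t | t ∈ Set.Icc (0:ℝ) T ∧ r t ≤ rstar} with hSdef
    have hSne : S.Nonempty := ⟨t₀, ht₀, ht₀le⟩
    have hSbdd : BddBelow S := ⟨0, fun x hx => hx.1.1⟩
    have hSclosed : IsClosed S := by
      rw [← isSeqClosed_iff_isClosed]
      intro u x hu hux
      have hxIcc : x ∈ Set.Icc (0:ℝ) T :=
        isClosed_Icc.isSeqClosed (fun n => (hu n).1) hux
      refine ⟨hxIcc, ?_⟩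
      have htend : Filter.Tendsto (fun n => r (u n)) Filter.atTop (nhds (r x)) :=
        (hcont x hxIcc).tendsto.comp hux
      exact le_of_tendsto htend (Filter.Eventually.of_forall fun n => (hu n).2)
    set t₁ := sInf S with ht₁def
    have ht₁S : t₁ ∈ S := hSclosed.csInf_mem hSne hSbdd
    have ht₁Icc : t₁ ∈ Set.Icc (0:ℝ) T := ht₁S.1
    have ht₁pos : 0 < t₁ := by
      rcases lt_or_eq_of_le ht₁Icc.1 with h | h
      · exact h
      · exfalso
        have := ht₁S.2
        rw [← h, hinit] at this
        linarith [hr₀.1]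
    have hsub : Set.Icc (0:ℝ) t₁ ⊆ Set.Icc (0:ℝ) T := Set.Icc_subset_Icc le_rfl ht₁Icc.2
    have hlt : ∀ t ∈ Set.Ico (0:ℝ) t₁, rstar < r t := by
      intro t ht
      by_contra hle
      push_neg at hle
      have htS : t ∈ S := ⟨⟨ht.1, le_trans ht.2.le ht₁Icc.2⟩, hle⟩
      exact absurd (csInf_le hSbdd htS) (not_le.mpr ht.2)
    -- r t₁ ≥ rstar by left continuity
    have hge : ∀ t ∈ Set.Icc (0:ℝ) t₁, rstar ≤ r t := by
      intro t ht
      rcases lt_or_eq_of_le ht.2 with h | h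
      · exact (hlt t ⟨ht.1, h⟩).le
      · rw [h]
        have hcl : t₁ ∈ closure (Set.Ioo (0:ℝ) t₁) := by
          rw [closure_Ioo (ne_of_lt ht₁pos)]
          exact ⟨ht₁pos.le, le_rfl⟩
        have hNB : (nhdsWithin t₁ (Set.Ioo (0:ℝ) t₁)).NeBot :=
          mem_closure_iff_nhdsWithin_neBot.mp hcl
        have htend : Filter.Tendsto r (nhdsWithin t₁ (Set.Ioo (0:ℝ) t₁)) (nhds (r t₁)) :=
          ((hcont t₁ (hsub ⟨ht₁pos.le, le_rfl⟩)).continuousWithinAt).tendsto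
        refine ge_of_tendsto htend ?_
        filter_upwards [self_mem_nhdsWithin] with s hs
        exact (hlt s ⟨hs.1.le, hs.2⟩).le
    have hcontOn : ContinuousOn r (Set.Icc 0 t₁) :=
      fun t ht => (hcont t (hsub ht)).continuousWithinAt
    obtain ⟨x, hxI, hxmax⟩ := isCompact_Icc.exists_isMaxOn ⟨0, le_rfl, ht₁pos.le⟩ hcontOn
    set M := r x with hMdef
    have hMR : M < R := (hrange x (hsub hxI)).2
    have hMge : rstar ≤ M := hge x hxI
    have hMpos : 0 < M := lt_of_lt_of_le h1 hMge
    have hD₀ : 0 < Real.log R - Real.log M := sub_pos.mpr (Real.log_lt_log hMpos hMR)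
    set L := Real.log (R / rstar) with hLdef
    set K := f / (rstar ^ 2 * L * (Real.log R - Real.log M)) with hKdef
    have hKpos : 0 < K := by
      apply div_pos hf
      positivity
    set w : ℝ → ℝ := fun t => Real.exp (K * t) * (Real.log (r t) - Real.log rstar) with hwdef
    -- derivative of w
    have hw : ∀ t ∈ Set.Icc (0:ℝ) t₁, HasDerivAt w
        (Real.exp (K * t) * K * (Real.log (r t) - Real.log rstar)
          + Real.exp (K * t) * ((r t)⁻¹ * F1 (r t))) t := by
      intro t ht
      have hrt : (0:ℝ) < r t := (hrange t (hsub ht)).1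
      have hexp : HasDerivAt (fun s => Real.exp (K * s)) (Real.exp (K * t) * K) t := by
        have h1' : HasDerivAt (fun s : ℝ => K * s) K t := by
          simpa using (hasDerivAt_id t).const_mul K
        exact (Real.hasDerivAt_exp (K * t)).comp t h1'
      have hlog : HasDerivAt (fun s => Real.log (r s) - Real.log rstar)
          ((r t)⁻¹ * F1 (r t)) t := by
        have := (Real.hasDerivAt_log (ne_of_gt hrt)).comp t (hode t (hsub ht))
        simpa using this.sub_const (Real.log rstar)
      exact hexp.mul hlog
    -- nonneg derivative
    have hw' : ∀ t ∈ Set.Icc (0:ℝ) t₁,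
        0 ≤ Real.exp (K * t) * K * (Real.log (r t) - Real.log rstar)
          + Real.exp (K * t) * ((r t)⁻¹ * F1 (r t)) := by
      intro t ht
      have hrt : (0:ℝ) < r t := (hrange t (hsub ht)).1
      have hrtR : r t < R := (hrange t (hsub ht)).2
      have hrge : rstar ≤ r t := hge t ht
      have hrM : r t ≤ M := hxmax ht
      have hv : 0 ≤ Real.log (r t) - Real.log rstar :=
        sub_nonneg.mpr (Real.log_le_log h1 hrge)
      have hD : 0 < Real.log R - Real.log (r t) :=
        sub_pos.mpr (Real.log_lt_log hrt hrtR)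
      have hDge : Real.log R - Real.log M ≤ Real.log R - Real.log (r t) := by
        have := Real.log_le_log hrt hrM
        linarith
      set v := Real.log (r t) - Real.log rstar with hvdef
      have hF : (r t)⁻¹ * F1 (r t) = -(f * v) / (r t ^ 2 * L * (Real.log R - Real.log (r t))) := by
        simp only [hvdef]
        rw [hF1, inv_mul_eq_div, div_div]
        congr 1
        ring
      rw [hF]
      have hden : 0 < r t ^ 2 * L * (Real.log R - Real.log (r t)) := by positivity
      have hdenle : rstar ^ 2 * L * (Real.log R - Real.log M) ≤
          r t ^ 2 * L * (Real.log R - Real.log (r t)) := by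
        have h2' : rstar ^ 2 ≤ r t ^ 2 := by nlinarith
        have a1 : rstar ^ 2 * L * (Real.log R - Real.log M) ≤
            r t ^ 2 * L * (Real.log R - Real.log M) :=
          mul_le_mul_of_nonneg_right (mul_le_mul_of_nonneg_right h2' hL.le) hD₀.le
        have a2 : r t ^ 2 * L * (Real.log R - Real.log M) ≤
            r t ^ 2 * L * (Real.log R - Real.log (r t)) :=
          mul_le_mul_of_nonneg_left hDge (by positivity)
        linarith
      have hKle : f / (r t ^ 2 * L * (Real.log R - Real.log (r t))) ≤ K := by
        rw [hKdef]
        apply div_le_div_of_nonneg_left hf.le _ hdenle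
        positivity
      have key : f * v / (r t ^ 2 * L * (Real.log R - Real.log (r t))) ≤ K * v := by
        have : f * v / (r t ^ 2 * L * (Real.log R - Real.log (r t)))
            = (f / (r t ^ 2 * L * (Real.log R - Real.log (r t)))) * v := by ring
        rw [this]
        exact mul_le_mul_of_nonneg_right hKle hv
      have hexp : 0 < Real.exp (K * t) := Real.exp_pos _
      have : Real.exp (K * t) * K * v + Real.exp (K * t) *
          (-(f * v) / (r t ^ 2 * L * (Real.log R - Real.log (r t))))
          = Real.exp (K * t) * (K * v - f * v / (r t ^ 2 * L * (Real.log R - Real.log (r t)))) := by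
        ring
      rw [this]
      exact mul_nonneg hexp.le (by linarith)
    -- monotone
    have hmono : MonotoneOn w (Set.Icc 0 t₁) := by
      apply monotoneOn_of_hasDerivWithinAt_nonneg (convex_Icc 0 t₁)
        (f' := fun t => Real.exp (K * t) * K * (Real.log (r t) - Real.log rstar)
          + Real.exp (K * t) * ((r t)⁻¹ * F1 (r t)))
      · exact fun t ht => ((hw t ht).continuousAt).continuousWithinAt
      · intro t ht
        rw [interior_Icc] at ht
        exact ((hw t ⟨ht.1.le, ht.2.le⟩).hasDerivWithinAt)
      · intro t ht
        rw [interior_Icc] at ht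
        exact hw' t ⟨ht.1.le, ht.2.le⟩
    have hw0 : 0 < w 0 := by
      simp only [hwdef, mul_zero, Real.exp_zero, one_mul, hinit]
      exact sub_pos.mpr (Real.log_lt_log h1 hr₀.1)
    have hwt₁ : w t₁ ≤ 0 := by
      have hrt₁ : (0:ℝ) < r t₁ := (hrange t₁ ht₁Icc).1
      have : Real.log (r t₁) - Real.log rstar ≤ 0 :=
        sub_nonpos.mpr (Real.log_le_log hrt₁ ht₁S.2)
      exact mul_nonpos_of_nonneg_of_nonpos (Real.exp_pos _).le this
    have : w 0 ≤ w t₁ := hmono ⟨le_rfl, ht₁pos.le⟩ ⟨ht₁pos.le, le_rfl⟩ ht₁pos.le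
    linarith
  intro t ht
  refine ⟨hmain t ht, ?_⟩
  have hrt : (0:ℝ) < r t := (hrange t ht).1
  have hrtR : r t < R := (hrange t ht).2
  have hnum : 0 < f * (Real.log (r t) - Real.log rstar) :=
    mul_pos hf (sub_pos.mpr (Real.log_lt_log h1 (hmain t ht)))
  have hden : 0 < r t * Real.log (R / rstar) * (Real.log R - Real.log (r t)) := by
    have hD : 0 < Real.log R - Real.log (r t) := sub_pos.mpr (Real.log_lt_log hrt hrtR)
    positivity
  rw [hF1]
  exact div_neg_of_neg_of_pos (by linarith) hden
end

section
/- Fix real constants r*, R, f with 0 < r* < R and f > 0, and define F₂(r) = − f·R²·(r − r*) / (r²·(R − r)·(R − r*)) for r ∈ (0, R). Let T > 0, let r₀ ∈ (r*, R), and let r : ℝ → ℝ satisfy r(0) = r₀, r(t) ∈ (0, R) for all t ∈ [0, T], and suppose r has derivative F₂(r(t)) at every t ∈ [0, T]. Then r(t) > r* for every t ∈ [0, T] (the evolving radius never reaches r* in finite time), and r′(t) = F₂(r(t)) < 0 for every t ∈ [0, T] (the radius is strictly decreasing). -/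
open Set

/-- Any solution of the three-dimensional concentric-spheres ODE `r′ = F₂(r)` starting
in `(r*, R)` stays strictly above `r*` for all time in `[0, T]` and is strictly
decreasing there (`F₂(r(t)) < 0`). -/
theorem F2_ode_solution_stays_above_rstar_and_decreases
    (rstar R f : ℝ) (h1 : 0 < rstar) (h2 : rstar < R) (hf : 0 < f)
    (F2 : ℝ → ℝ)
    (hF2 : ∀ r, F2 r = -(f * R ^ 2 * (r - rstar)) /
      (r ^ 2 * (R - r) * (R - rstar)))
    (T : ℝ) (hT : 0 < T)
    (r₀ : ℝ) (hr₀ : r₀ ∈ Set.Ioo rstar R)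
    (r : ℝ → ℝ) (hinit : r 0 = r₀)
    (hrange : ∀ t ∈ Set.Icc (0:ℝ) T, r t ∈ Set.Ioo (0:ℝ) R)
    (hode : ∀ t ∈ Set.Icc (0:ℝ) T, HasDerivAt r (F2 (r t)) t) :
    ∀ t ∈ Set.Icc (0:ℝ) T, rstar < r t ∧ F2 (r t) < 0 := by
  have hR : 0 < R := h1.trans h2
  have hcont : ContinuousOn r (Set.Icc 0 T) :=
    fun t ht => ((hode t ht).continuousAt).continuousWithinAt
  have key : ∀ t ∈ Set.Icc (0:ℝ) T, rstar < r t := by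
    by_contra hcon
    push_neg at hcon
    obtain ⟨t₀, ht₀, ht₀le⟩ := hcon
    set S : Set ℝ := Set.Icc 0 T ∩ r ⁻¹' Set.Iic rstar with hS
    have hSne : S.Nonempty := ⟨t₀, ht₀, ht₀le⟩
    have hSbdd : BddBelow S := ⟨0, fun x hx => hx.1.1⟩
    have hSclosed : IsClosed S :=
      hcont.preimage_isClosed_of_isClosed isClosed_Icc isClosed_Iic
    set s := sInf S with hs
    have hsS : s ∈ S := hSclosed.csInf_mem hSne hSbdd
    have hsIcc : s ∈ Set.Icc (0:ℝ) T := hsS.1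
    have hrs_le : r s ≤ rstar := hsS.2
    have hspos : 0 < s := by
      rcases lt_or_eq_of_le hsIcc.1 with h | h
      · exact h
      · exfalso
        rw [← h] at hrs_le
        rw [hinit] at hrs_le
        exact absurd hr₀.1 (not_lt.2 hrs_le)
    -- on [0, s), r t > rstar
    have habove : ∀ t ∈ Set.Ico (0:ℝ) s, rstar < r t := by
      intro t ht
      by_contra hle
      push_neg at hle
      have : t ∈ S := ⟨⟨ht.1, le_trans ht.2.le hsIcc.2⟩, hle⟩
      exact absurd (csInf_le hSbdd this) (not_le.2 ht.2)
    -- r s = rstar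
    have hIcoSub : Set.Ico (0:ℝ) s ⊆ Set.Icc 0 T :=
      fun x hx => ⟨hx.1, le_trans hx.2.le hsIcc.2⟩
    have hrs_ge : rstar ≤ r s := by
      have htend : Filter.Tendsto r (nhdsWithin s (Set.Ico 0 s)) (nhds (r s)) :=
        ((hcont s hsIcc).mono hIcoSub).tendsto
      have : (nhdsWithin s (Set.Ico 0 s)).NeBot := right_nhdsWithin_Ico_neBot hspos
      refine ge_of_tendsto htend ?_
      filter_upwards [self_mem_nhdsWithin] with x hx
      exact (habove x hx).le
    have hrs : r s = rstar := le_antisymm hrs_le hrs_ge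
    -- compactness bounds on [0, s]
    have hIccSub : Set.Icc (0:ℝ) s ⊆ Set.Icc 0 T :=
      Set.Icc_subset_Icc le_rfl hsIcc.2
    have hcont' : ContinuousOn r (Set.Icc 0 s) := hcont.mono hIccSub
    obtain ⟨tM, htM, hMmax⟩ := isCompact_Icc.exists_isMaxOn
      ⟨0, Set.left_mem_Icc.2 hspos.le⟩ hcont'
    obtain ⟨tm, htm, hmmin⟩ := isCompact_Icc.exists_isMinOn
      ⟨0, Set.left_mem_Icc.2 hspos.le⟩ hcont'
    set M := r tM with hMdef
    set m := r tm with hmdef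
    have hMlt : M < R := (hrange tM (hIccSub htM)).2
    have hmpos : 0 < m := (hrange tm (hIccSub htm)).1
    have hden : 0 < m ^ 2 * (R - M) * (R - rstar) := by
      apply mul_pos (mul_pos (pow_pos hmpos 2) (by linarith)) (by linarith)
    set K := f * R ^ 2 / (m ^ 2 * (R - M) * (R - rstar)) with hK
    have hKpos : 0 < K := div_pos (mul_pos hf (pow_pos hR 2)) hden
    -- Grönwall on u t = r (s - t) - rstar
    set u : ℝ → ℝ := fun t => r (s - t) - rstar with hu
    have hucont : ContinuousOn u (Set.Icc 0 s) := by
      apply ContinuousOn.sub _ continuousOn_const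
      apply hcont'.comp (continuousOn_const.sub continuousOn_id)
      intro x hx
      simp only [Set.mem_Icc, id_eq, Pi.sub_apply] at *
      constructor <;> linarith [hx.1, hx.2]
    have hmem : ∀ t ∈ Set.Icc (0:ℝ) s, s - t ∈ Set.Icc (0:ℝ) s := by
      intro t ht
      exact ⟨by linarith [ht.2], by linarith [ht.1]⟩
    have huderiv : ∀ t ∈ Set.Ico (0:ℝ) s,
        HasDerivWithinAt u (-(F2 (r (s - t)))) (Set.Ici t) t := by
      intro t ht
      have h1' : HasDerivAt r (F2 (r (s - t))) (s - t) :=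
        hode (s - t) (hIccSub (hmem t ⟨ht.1, ht.2.le⟩))
      have h2' : HasDerivAt (fun x : ℝ => s - x) (-1) t := by
        simpa using (hasDerivAt_id t).const_sub s
      have h3' : HasDerivAt (fun x => r (s - x)) (F2 (r (s - t)) * (-1)) t :=
        h1'.comp t h2'
      have h4' : HasDerivAt u (F2 (r (s - t)) * (-1)) t := h3'.sub_const rstar
      simpa [mul_comm] using h4'.hasDerivWithinAt
    have hbound : ∀ t ∈ Set.Ico (0:ℝ) s,
        ‖-(F2 (r (s - t)))‖ ≤ K * ‖u t‖ + 0 := by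
      intro t ht
      set x := r (s - t) with hx
      have hxmem : s - t ∈ Set.Icc (0:ℝ) s := hmem t ⟨ht.1, ht.2.le⟩
      have hxm : m ≤ x := hmmin hxmem
      have hxM : x ≤ M := hMmax hxmem
      have hxpos : 0 < x := lt_of_lt_of_le hmpos hxm
      have hxR : x < R := lt_of_le_of_lt hxM hMlt
      have hdenx : 0 < x ^ 2 * (R - x) * (R - rstar) :=
        mul_pos (mul_pos (pow_pos hxpos 2) (by linarith)) (by linarith)
      have heq : -(F2 x) = f * R ^ 2 / (x ^ 2 * (R - x) * (R - rstar)) * (x - rstar) := by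
        rw [hF2]
        field_simp
      have hcK : f * R ^ 2 / (x ^ 2 * (R - x) * (R - rstar)) ≤ K := by
        rw [hK]
        apply div_le_div_of_nonneg_left (by positivity) hden
        apply mul_le_mul_of_nonneg_right _ (by linarith)
        apply mul_le_mul (pow_le_pow_left₀ hmpos.le hxm 2) (by linarith)
          (by linarith) (by positivity)
      have hcpos : 0 < f * R ^ 2 / (x ^ 2 * (R - x) * (R - rstar)) :=
        div_pos (mul_pos hf (pow_pos hR 2)) hdenx
      have huval : u t = x - rstar := rfl
      rw [heq, add_zero, huval]
      calc ‖f * R ^ 2 / (x ^ 2 * (R - x) * (R - rstar)) * (x - rstar)‖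
          = |f * R ^ 2 / (x ^ 2 * (R - x) * (R - rstar))| * |x - rstar| := abs_mul _ _
        _ ≤ K * |x - rstar| := by
            apply mul_le_mul_of_nonneg_right _ (abs_nonneg _)
            rwa [abs_of_pos hcpos]
        _ = K * ‖x - rstar‖ := rfl
    have hu0 : ‖u 0‖ ≤ 0 := by
      simp only [hu]
      rw [sub_zero, hrs]
      simp
    have hG := norm_le_gronwallBound_of_norm_deriv_right_le hucont huderiv hu0 hbound
    have hGs := hG s (Set.right_mem_Icc.2 hspos.le)
    rw [gronwallBound_ε0_δ0] at hGs
    have : u s = 0 := norm_le_zero_iff.1 hGs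
    have : r 0 = rstar := by
      have h' : r (s - s) - rstar = 0 := this
      rw [sub_self] at h'
      linarith
    rw [hinit] at this
    exact absurd hr₀.1 (by rw [this]; exact lt_irrefl rstar)
  intro t ht
  refine ⟨key t ht, ?_⟩
  have h := hrange t ht
  rw [hF2]
  apply div_neg_of_neg_of_pos
  · have h' := mul_pos (mul_pos hf (pow_pos hR 2)) (sub_pos.2 (key t ht))
    linarith
  · exact mul_pos (mul_pos (pow_pos h.1 2) (by linarith [h.2])) (by linarith)
end
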